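/- arXiv:2605.14776 — 10 statements merged into one kernel-verified Lean document; each statement's English description precedes it below -/
import Mathlib

section
/- Let 0 ≤ λ < γ ≤ δ, p ≥ 1 real, and define k₁ : [0,1] → ℝ by k₁(r) = r + Σ_{m=2}^∞ c_m r^m + Σ_{m=2}^∞ (c_m)^p r^{pm} − 1 − Σ_{m=2}^∞ (−1)^{m−1} c_m, where c_m = 4(γ−λ)/(m^2(2γ+(δ−γ)(m−1))). Then k₁ is continuous on [0,1], strictly increasing on (0,1), satisfies k₁(0) < 0 and k₁(1) > 0, and hence has a unique root in (0,1). -/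
open Real Set

theorem improved_bohr_aux_function_unique_root (γ δ lam p : ℝ) (hlam : 0 ≤ lam) (hl : lam < γ)
    (hg : γ ≤ δ) (hp : 1 ≤ p)
    (c : ℕ → ℝ)
    (hc : ∀ m : ℕ, c m = 4 * (γ - lam) / ((m : ℝ) ^ 2 * (2 * γ + (δ - γ) * ((m : ℝ) - 1))))
    (k₁ : ℝ → ℝ)
    (hk : ∀ r : ℝ, k₁ r =
      r + (∑' m : ℕ, c (m + 2) * r ^ (m + 2))
        + (∑' m : ℕ, (c (m + 2)) ^ p * r ^ (p * ((m : ℝ) + 2)))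
        - 1 - ∑' m : ℕ, (-1 : ℝ) ^ (m + 1) * c (m + 2)) :
    ContinuousOn k₁ (Icc 0 1) ∧ StrictMonoOn k₁ (Ioo 0 1) ∧
      k₁ 0 < 0 ∧ 0 < k₁ 1 ∧ (∃! r : ℝ, r ∈ Ioo (0 : ℝ) 1 ∧ k₁ r = 0) := by
  have hγ : 0 < γ := lt_of_le_of_lt hlam hl
  have hgl : 0 < γ - lam := by linarith
  have hp0 : 0 < p := by linarith
  have hq_pos : ∀ m : ℕ, 0 < p * ((m : ℝ) + 2) := fun m => mul_pos hp0 (by positivity)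
  -- positivity of the E factor
  have hE : ∀ n : ℕ, 2 ≤ n → 0 < 2 * γ + (δ - γ) * ((n : ℝ) - 1) := by
    intro n hn
    have h2 : (2 : ℝ) ≤ (n : ℝ) := by exact_mod_cast hn
    nlinarith
  have hcpos : ∀ n : ℕ, 2 ≤ n → 0 < c n := by
    intro n hn
    have h2 : (2 : ℝ) ≤ (n : ℝ) := by exact_mod_cast hn
    rw [hc]
    exact div_pos (by linarith) (mul_pos (by positivity) (hE n hn))
  have hcle : ∀ n : ℕ, 2 ≤ n → c n ≤ 2 / (n : ℝ) ^ 2 := by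
    intro n hn
    have h2 : (2 : ℝ) ≤ (n : ℝ) := by exact_mod_cast hn
    have hEn := hE n hn
    rw [hc, div_le_div_iff₀ (mul_pos (by positivity) hEn) (by positivity)]
    nlinarith [mul_nonneg (mul_nonneg (sub_nonneg.2 hg) (by linarith : (0:ℝ) ≤ (n:ℝ) - 1)) (sq_nonneg (n:ℝ)),
      mul_nonneg hlam (sq_nonneg (n:ℝ))]
  -- c is antitone on indices ≥ 2
  have hmono : ∀ a b : ℕ, 2 ≤ a → a ≤ b → c b ≤ c a := by
    intro a b ha hab
    have h2a : (2 : ℝ) ≤ (a : ℝ) := by exact_mod_cast ha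
    have hab' : (a : ℝ) ≤ (b : ℝ) := by exact_mod_cast hab
    have hEa := hE a ha
    have hEb := hE b (ha.trans hab)
    have ha0 : (0:ℝ) < (a : ℝ) := by linarith
    have hb0 : (0:ℝ) < (b : ℝ) := by linarith
    have hDa : (0:ℝ) < (a : ℝ) ^ 2 * (2 * γ + (δ - γ) * ((a : ℝ) - 1)) :=
      mul_pos (pow_pos ha0 2) hEa
    have hDb : (0:ℝ) < (b : ℝ) ^ 2 * (2 * γ + (δ - γ) * ((b : ℝ) - 1)) :=
      mul_pos (pow_pos hb0 2) hEb
    rw [hc a, hc b, div_le_div_iff₀ hDb hDa]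
    have hsq : ((a:ℝ))^2 ≤ ((b:ℝ))^2 := by nlinarith
    have hEE : 2 * γ + (δ - γ) * ((a : ℝ) - 1) ≤ 2 * γ + (δ - γ) * ((b : ℝ) - 1) := by
      nlinarith [mul_nonneg (sub_nonneg.2 hg) (sub_nonneg.2 hab')]
    nlinarith [mul_le_mul hsq hEE hEa.le (pow_nonneg hb0.le 2)]
  have hc2 : ∀ m : ℕ, 0 < c (m + 2) := fun m => hcpos (m + 2) (by omega)
  have hcb : ∀ m : ℕ, c (m + 2) ≤ 2 / ((m : ℝ) + 2) ^ 2 := by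
    intro m
    have h := hcle (m + 2) (by omega)
    push_cast at h
    exact h
  -- summability of the comparison series
  have hsum_base : Summable (fun n : ℕ => 2 / ((n : ℝ) + 2) ^ 2) := by
    have h1 : Summable (fun n : ℕ => 1 / ((n : ℝ)) ^ 2) := by
      have := Real.summable_one_div_nat_pow (p := 2)
      simpa using this.mpr one_lt_two
    have h2 := (summable_nat_add_iff 2).mpr h1
    have h3 := h2.mul_left 2
    apply h3.congr
    intro n
    push_cast
    ring
  have hsumc : Summable (fun m : ℕ => c (m + 2)) :=
    Summable.of_nonneg_of_le (fun m => (hc2 m).le) hcb hsum_base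
  have hcle1 : ∀ m : ℕ, c (m + 2) ≤ 1 := by
    intro m
    refine (hcb m).trans ?_
    rw [div_le_one (by positivity)]
    nlinarith [(by positivity : (0:ℝ) ≤ (m:ℝ))]
  have hcp_le : ∀ m : ℕ, (c (m + 2)) ^ p ≤ c (m + 2) := by
    intro m
    calc (c (m + 2)) ^ p ≤ (c (m + 2)) ^ (1 : ℝ) :=
          Real.rpow_le_rpow_of_exponent_ge (hc2 m) (hcle1 m) hp
      _ = c (m + 2) := Real.rpow_one _
  have hcp_nonneg : ∀ m : ℕ, 0 ≤ (c (m + 2)) ^ p := fun m => Real.rpow_nonneg (hc2 m).le p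
  have hsumcp : Summable (fun m : ℕ => (c (m + 2)) ^ p) :=
    Summable.of_nonneg_of_le hcp_nonneg hcp_le hsumc
  -- even/odd decomposition of the alternating series
  have hce_le : ∀ k : ℕ, c (2 * k + 2) ≤ 2 / ((k : ℝ) + 2) ^ 2 := by
    intro k
    refine (hcle (2 * k + 2) (by omega)).trans ?_
    have h1 : ((k : ℝ) + 2) ≤ ((2 * k + 2 : ℕ) : ℝ) := by push_cast; linarith [(by positivity : (0:ℝ) ≤ (k:ℝ))]
    gcongr
  have hco_le : ∀ k : ℕ, c (2 * k + 3) ≤ 2 / ((k : ℝ) + 2) ^ 2 := by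
    intro k
    refine (hcle (2 * k + 3) (by omega)).trans ?_
    have h1 : ((k : ℝ) + 2) ≤ ((2 * k + 3 : ℕ) : ℝ) := by push_cast; linarith [(by positivity : (0:ℝ) ≤ (k:ℝ))]
    gcongr
  have hsume : Summable (fun k : ℕ => c (2 * k + 2)) :=
    Summable.of_nonneg_of_le (fun k => (hcpos _ (by omega)).le) hce_le hsum_base
  have hsumo : Summable (fun k : ℕ => c (2 * k + 3)) :=
    Summable.of_nonneg_of_le (fun k => (hcpos _ (by omega)).le) hco_le hsum_base
  have hfe : (fun k : ℕ => (-1 : ℝ) ^ (2 * k + 1) * c (2 * k + 2)) = fun k => -(c (2 * k + 2)) := by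
    funext k
    rw [(odd_two_mul_add_one k).neg_one_pow]
    ring
  have hfo : (fun k : ℕ => (-1 : ℝ) ^ (2 * k + 1 + 1) * c (2 * k + 1 + 2)) = fun k => c (2 * k + 3) := by
    funext k
    have h1 : Even (2 * k + 1 + 1) := ⟨k + 1, by ring⟩
    rw [h1.neg_one_pow]
    have h2 : 2 * k + 1 + 2 = 2 * k + 3 := by omega
    rw [h2, one_mul]
  have hS : (∑' m : ℕ, (-1 : ℝ) ^ (m + 1) * c (m + 2))
      = (∑' k : ℕ, c (2 * k + 3)) - ∑' k : ℕ, c (2 * k + 2) := by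
    have he' : Summable (fun k : ℕ => (-1 : ℝ) ^ (2 * k + 1) * c (2 * k + 2)) := by
      rw [hfe]; exact hsume.neg
    have ho' : Summable (fun k : ℕ => (-1 : ℝ) ^ (2 * k + 1 + 1) * c (2 * k + 1 + 2)) := by
      rw [hfo]; exact hsumo
    rw [← tsum_even_add_odd (f := fun m : ℕ => (-1 : ℝ) ^ (m + 1) * c (m + 2)) he' ho', hfe, hfo, tsum_neg]
    ring
  -- bound the even sum by 1
  have haux : ∀ n : ℕ, ∑ k ∈ Finset.range n, 1 / (2 * ((k : ℝ) + 1) ^ 2) ≤ 1 - 1 / ((n : ℝ) + 1) := by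
    intro n
    induction n with
    | zero => simp
    | succ n ih =>
      rw [Finset.sum_range_succ]
      have hn : (0 : ℝ) ≤ (n : ℝ) := Nat.cast_nonneg n
      have h1 : 1 / (2 * ((n : ℝ) + 1) ^ 2) ≤ 1 / ((n : ℝ) + 1) - 1 / ((n : ℝ) + 2) := by
        rw [div_sub_div _ _ (by positivity) (by positivity),
          div_le_div_iff₀ (by positivity) (by positivity)]
        nlinarith
      push_cast
      have h2 : 1 / ((n : ℝ) + 1 + 1) = 1 / ((n : ℝ) + 2) := by ring_nf
      linarith [h2]
  have htsum_e_le : (∑' k : ℕ, c (2 * k + 2)) ≤ 1 := by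
    apply Real.tsum_le_of_sum_range_le (fun k => (hcpos _ (by omega)).le)
    intro n
    have hstep : ∀ k : ℕ, c (2 * k + 2) ≤ 1 / (2 * ((k : ℝ) + 1) ^ 2) := by
      intro k
      refine (hcle (2 * k + 2) (by omega)).trans ?_
      have h2 : ((2 * k + 2 : ℕ) : ℝ) = 2 * ((k : ℝ) + 1) := by push_cast; ring
      rw [h2]
      rw [div_le_div_iff₀ (by positivity) (by positivity)]
      nlinarith [(by positivity : (0:ℝ) ≤ (k:ℝ))]
    calc ∑ k ∈ Finset.range n, c (2 * k + 2)
        ≤ ∑ k ∈ Finset.range n, 1 / (2 * ((k : ℝ) + 1) ^ 2) :=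
          Finset.sum_le_sum fun k _ => hstep k
      _ ≤ 1 - 1 / ((n : ℝ) + 1) := haux n
      _ ≤ 1 := by
          have : (0:ℝ) < (n : ℝ) + 1 := by positivity
          have : (0:ℝ) ≤ 1 / ((n : ℝ) + 1) := by positivity
          linarith
  have htsum_o_pos : 0 < ∑' k : ℕ, c (2 * k + 3) :=
    Summable.tsum_pos hsumo (fun k => (hcpos _ (by omega)).le) 0 (hcpos 3 (by omega))
  have htsum_o_le_e : (∑' k : ℕ, c (2 * k + 3)) ≤ ∑' k : ℕ, c (2 * k + 2) :=
    Summable.tsum_le_tsum (fun k => hmono (2 * k + 2) (2 * k + 3) (by omega) (by omega)) hsumo hsume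
  -- values at 0 and 1
  have e0 : k₁ 0 = -1 - (∑' m : ℕ, (-1 : ℝ) ^ (m + 1) * c (m + 2)) := by
    rw [hk]
    have h1 : (fun m : ℕ => c (m + 2) * (0 : ℝ) ^ (m + 2)) = fun _ => (0 : ℝ) := by
      funext m; rw [zero_pow (by omega), mul_zero]
    have h2 : (fun m : ℕ => (c (m + 2)) ^ p * (0 : ℝ) ^ (p * ((m : ℝ) + 2))) = fun _ => (0 : ℝ) := by
      funext m; rw [Real.zero_rpow (hq_pos m).ne', mul_zero]
    rw [h1, h2, tsum_zero]
    ring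
  have e1 : k₁ 1 = (∑' m : ℕ, c (m + 2)) + (∑' m : ℕ, (c (m + 2)) ^ p)
      - (∑' m : ℕ, (-1 : ℝ) ^ (m + 1) * c (m + 2)) := by
    rw [hk]
    have h1 : (fun m : ℕ => c (m + 2) * (1 : ℝ) ^ (m + 2)) = fun m => c (m + 2) := by
      funext m; rw [one_pow, mul_one]
    have h2 : (fun m : ℕ => (c (m + 2)) ^ p * (1 : ℝ) ^ (p * ((m : ℝ) + 2)))
        = fun m => (c (m + 2)) ^ p := by
      funext m; rw [Real.one_rpow, mul_one]
    rw [h1, h2]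
    ring
  have h0 : k₁ 0 < 0 := by rw [e0, hS]; linarith
  have htsumc_pos : 0 < ∑' m : ℕ, c (m + 2) :=
    Summable.tsum_pos hsumc (fun m => (hc2 m).le) 0 (hc2 0)
  have htsumcp_nonneg : 0 ≤ ∑' m : ℕ, (c (m + 2)) ^ p := tsum_nonneg hcp_nonneg
  have h1 : 0 < k₁ 1 := by rw [e1, hS]; linarith
  -- continuity
  have hcontA : ContinuousOn (fun r : ℝ => ∑' m : ℕ, c (m + 2) * r ^ (m + 2)) (Icc 0 1) := by
    apply continuousOn_tsum (u := fun m => c (m + 2))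
      (fun m => (continuous_const.mul (continuous_pow (m + 2))).continuousOn) hsumc
    intro m r hr
    rw [Real.norm_eq_abs, Pi.mul_apply, abs_mul, abs_of_pos (hc2 m)]
    calc c (m + 2) * |r ^ (m + 2)| ≤ c (m + 2) * 1 := by
          apply mul_le_mul_of_nonneg_left _ (hc2 m).le
          rw [abs_pow]
          exact pow_le_one₀ (abs_nonneg r) (abs_le.mpr ⟨by linarith [hr.1], hr.2⟩)
      _ = c (m + 2) := mul_one _
  have hcontB : ContinuousOn
      (fun r : ℝ => ∑' m : ℕ, (c (m + 2)) ^ p * r ^ (p * ((m : ℝ) + 2))) (Icc 0 1) := by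
    apply continuousOn_tsum (u := fun m => c (m + 2)) ?_ hsumc ?_
    · intro m
      exact continuousOn_const.mul (fun x _ =>
        (Real.continuousAt_rpow_const x _ (Or.inr (hq_pos m).le)).continuousWithinAt)
    · intro m r hr
      rw [Real.norm_eq_abs, abs_mul, abs_of_nonneg (hcp_nonneg m),
        abs_of_nonneg (Real.rpow_nonneg hr.1 _)]
      calc (c (m + 2)) ^ p * r ^ (p * ((m : ℝ) + 2)) ≤ (c (m + 2)) ^ p * 1 :=
            mul_le_mul_of_nonneg_left (Real.rpow_le_one hr.1 hr.2 (hq_pos m).le) (hcp_nonneg m)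
        _ = (c (m + 2)) ^ p := mul_one _
        _ ≤ c (m + 2) := hcp_le m
  have hkfun : k₁ = fun r : ℝ =>
      r + (∑' m : ℕ, c (m + 2) * r ^ (m + 2))
        + (∑' m : ℕ, (c (m + 2)) ^ p * r ^ (p * ((m : ℝ) + 2)))
        - 1 - ∑' m : ℕ, (-1 : ℝ) ^ (m + 1) * c (m + 2) := funext hk
  have hcont : ContinuousOn k₁ (Icc 0 1) := by
    rw [hkfun]
    exact (((continuousOn_id.add hcontA).add hcontB).sub continuousOn_const).sub continuousOn_const
  -- strict monotonicity
  have hsumA : ∀ x : ℝ, 0 ≤ x → x ≤ 1 → Summable (fun m : ℕ => c (m + 2) * x ^ (m + 2)) := by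
    intro x hx0 hx1
    apply Summable.of_nonneg_of_le (fun m => mul_nonneg (hc2 m).le (pow_nonneg hx0 _))
      (fun m => ?_) hsumc
    calc c (m + 2) * x ^ (m + 2) ≤ c (m + 2) * 1 :=
          mul_le_mul_of_nonneg_left (pow_le_one₀ hx0 hx1) (hc2 m).le
      _ = c (m + 2) := mul_one _
  have hsumB : ∀ x : ℝ, 0 ≤ x → x ≤ 1 →
      Summable (fun m : ℕ => (c (m + 2)) ^ p * x ^ (p * ((m : ℝ) + 2))) := by
    intro x hx0 hx1
    apply Summable.of_nonneg_of_le
      (fun m => mul_nonneg (hcp_nonneg m) (Real.rpow_nonneg hx0 _)) (fun m => ?_) hsumc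
    calc (c (m + 2)) ^ p * x ^ (p * ((m : ℝ) + 2)) ≤ (c (m + 2)) ^ p * 1 :=
          mul_le_mul_of_nonneg_left (Real.rpow_le_one hx0 hx1 (hq_pos m).le) (hcp_nonneg m)
      _ = (c (m + 2)) ^ p := mul_one _
      _ ≤ c (m + 2) := hcp_le m
  have hsmono : StrictMonoOn k₁ (Ioo 0 1) := by
    intro x hx y hy hxy
    rw [hk x, hk y]
    have hA : (∑' m : ℕ, c (m + 2) * x ^ (m + 2)) ≤ ∑' m : ℕ, c (m + 2) * y ^ (m + 2) :=
      Summable.tsum_le_tsum (fun m => mul_le_mul_of_nonneg_left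
        (pow_le_pow_left₀ hx.1.le hxy.le _) (hc2 m).le)
        (hsumA x hx.1.le hx.2.le) (hsumA y hy.1.le hy.2.le)
    have hB : (∑' m : ℕ, (c (m + 2)) ^ p * x ^ (p * ((m : ℝ) + 2)))
        ≤ ∑' m : ℕ, (c (m + 2)) ^ p * y ^ (p * ((m : ℝ) + 2)) :=
      Summable.tsum_le_tsum (fun m => mul_le_mul_of_nonneg_left
        (Real.rpow_le_rpow hx.1.le hxy.le (hq_pos m).le) (hcp_nonneg m))
        (hsumB x hx.1.le hx.2.le) (hsumB y hy.1.le hy.2.le)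
    linarith
  -- conclusion
  obtain ⟨r, hrmem, hreq⟩ := intermediate_value_Ioo (zero_le_one) hcont (Set.mem_Ioo.mpr ⟨h0, h1⟩)
  refine ⟨hcont, hsmono, h0, h1, r, ⟨hrmem, hreq⟩, ?_⟩
  rintro s ⟨hs, hs0⟩
  exact hsmono.injOn hs hrmem (by rw [hs0, hreq])
end

section
/- Let 0 ≤ λ < γ ≤ δ and define K₁ : [0,1] → ℝ by K₁(r) = r + Σ_{m=2}^∞ 2c_m r^m − 1 − Σ_{m=2}^∞ (−1)^{m−1} c_m with c_m = 4(γ−λ)/(m^2(2γ+(δ−γ)(m−1))). Then K₁ is strictly increasing on (0,1), K₁(0) < 0, K₁(1) > 0, and K₁ has a unique root in (0,1). -/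
open Real Set

theorem bohr_rogosinski_aux_K1_unique_root (γ δ lam : ℝ) (hlam : 0 ≤ lam) (hl : lam < γ)
    (hg : γ ≤ δ)
    (c : ℕ → ℝ)
    (hc : ∀ m : ℕ, c m = 4 * (γ - lam) / ((m : ℝ) ^ 2 * (2 * γ + (δ - γ) * ((m : ℝ) - 1))))
    (K₁ : ℝ → ℝ)
    (hK : ∀ r : ℝ, K₁ r =
      r + (∑' m : ℕ, 2 * c (m + 2) * r ^ (m + 2))
        - 1 - ∑' m : ℕ, (-1 : ℝ) ^ (m + 1) * c (m + 2)) :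
    StrictMonoOn K₁ (Ioo 0 1) ∧ K₁ 0 < 0 ∧ 0 < K₁ 1 ∧
      (∃! r : ℝ, r ∈ Ioo (0 : ℝ) 1 ∧ K₁ r = 0) := by
  have hγ : 0 < γ := lt_of_le_of_lt hlam hl
  have hγl : 0 < γ - lam := by linarith
  have hδγ : 0 ≤ δ - γ := by linarith
  set a : ℕ → ℝ := fun m => c (m + 2) with ha_def
  have ha : ∀ m : ℕ, a m = 4 * (γ - lam) / (((m : ℝ) + 2) ^ 2 * (2 * γ + (δ - γ) * ((m : ℝ) + 1))) := by
    intro m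
    show c (m + 2) = _
    rw [hc (m + 2)]
    push_cast
    ring_nf
  have hDpos : ∀ m : ℕ, 0 < ((m : ℝ) + 2) ^ 2 * (2 * γ + (δ - γ) * ((m : ℝ) + 1)) := by
    intro m
    have h1 : (0:ℝ) < ((m : ℝ) + 2) ^ 2 := by positivity
    have h2 : (0:ℝ) < 2 * γ + (δ - γ) * ((m : ℝ) + 1) := by
      have : (0:ℝ) ≤ (δ - γ) * ((m : ℝ) + 1) := by positivity
      linarith
    exact mul_pos h1 h2
  have hapos : ∀ m : ℕ, 0 < a m := by
    intro m; rw [ha m]; exact div_pos (by linarith) (hDpos m)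
  have hanti : ∀ m n : ℕ, m ≤ n → a n ≤ a m := by
    intro m n hmn
    rw [ha m, ha n]
    have hc' : ((m : ℝ)) ≤ (n : ℝ) := Nat.cast_le.2 hmn
    apply div_le_div_of_nonneg_left (by linarith) (hDpos m)
    have h1 : ((m : ℝ) + 2) ^ 2 ≤ ((n : ℝ) + 2) ^ 2 := by nlinarith
    have h2 : 2 * γ + (δ - γ) * ((m : ℝ) + 1) ≤ 2 * γ + (δ - γ) * ((n : ℝ) + 1) := by nlinarith
    have h3 : (0:ℝ) ≤ ((m : ℝ) + 2) ^ 2 := by positivity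
    have h4 : (0:ℝ) < 2 * γ + (δ - γ) * ((n : ℝ) + 1) := by nlinarith
    nlinarith
  have hsum : Summable a := by
    have hS2 : Summable (fun n : ℕ => (2 * (γ - lam) / γ) * (1 / ((n:ℝ)+2)^2)) := by
      apply Summable.mul_left
      have h : Summable (fun n : ℕ => (1:ℝ)/(n:ℝ)^2) :=
        Real.summable_one_div_nat_pow.mpr one_lt_two
      have := (summable_nat_add_iff 2).2 h
      convert this using 2 with n
      · rfl
      · push_cast; ring
    apply Summable.of_nonneg_of_le (fun m => (hapos m).le) _ hS2
    intro m
    rw [ha m]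
    have hrw : (2 * (γ - lam) / γ) * (1 / ((m:ℝ)+2)^2)
        = 4 * (γ - lam) / (((m : ℝ) + 2) ^ 2 * (2 * γ)) := by
      field_simp; ring
    rw [hrw]
    apply div_le_div_of_nonneg_left (by linarith) (by positivity)
    have : (0:ℝ) ≤ (δ - γ) * ((m : ℝ) + 1) := by positivity
    nlinarith [sq_nonneg ((m:ℝ)+2), hDpos m]
  -- summability of the alternating series
  have hSalt : Summable (fun m : ℕ => (-1 : ℝ) ^ (m + 1) * a m) := by
    apply Summable.of_norm
    convert hsum using 2 with m
    rw [norm_mul, norm_pow, norm_neg, norm_one, one_pow, one_mul,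
      Real.norm_eq_abs, abs_of_pos (hapos m)]
  set S : ℝ := ∑' m : ℕ, (-1 : ℝ) ^ (m + 1) * a m with hS_def
  have hinj2 : Function.Injective (fun k : ℕ => 2 * k) := fun x y h => by
    dsimp only at h; omega
  have hsum_e : Summable (fun k : ℕ => a (2 * k)) := hsum.comp_injective hinj2
  have hinj2' : Function.Injective (fun k : ℕ => 2 * k + 1) := fun x y h => by
    dsimp only at h; omega
  have hsum_o : Summable (fun k : ℕ => a (2 * k + 1)) := hsum.comp_injective hinj2'
  have hinj2'' : Function.Injective (fun k : ℕ => 2 * k + 2) := fun x y h => by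
    dsimp only at h; omega
  have hsum_o2 : Summable (fun k : ℕ => a (2 * k + 2)) := hsum.comp_injective hinj2''
  have hfe : (fun k : ℕ => (-1 : ℝ) ^ (2 * k + 1) * a (2 * k)) = fun k => -(a (2 * k)) := by
    funext k; rw [pow_succ, pow_mul]; norm_num
  have hfo : (fun k : ℕ => (-1 : ℝ) ^ (2 * k + 1 + 1) * a (2 * k + 1)) = fun k => a (2 * k + 1) := by
    funext k
    rw [show 2 * k + 1 + 1 = 2 * (k + 1) by ring, pow_mul]
    norm_num
  -- S ≤ 0
  have hSle : S ≤ 0 := by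
    rw [hS_def, ← tsum_even_add_odd (f := fun m => (-1 : ℝ) ^ (m + 1) * a m)
      (by rw [hfe]; exact hsum_e.neg) (by rw [hfo]; exact hsum_o)]
    rw [hfe, hfo, tsum_neg]
    have : ∑' k : ℕ, a (2 * k + 1) ≤ ∑' k : ℕ, a (2 * k) :=
      Summable.tsum_le_tsum (fun k => hanti _ _ (by omega)) hsum_o hsum_e
    linarith
  -- S ≥ -(a 0)
  have hSge : -(a 0) ≤ S := by
    have hge : (fun k : ℕ => (-1:ℝ) ^ (2 * k + 1 + 1) * a (2 * k + 1))
        = fun k => a (2 * k + 1) := hfo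
    have hgo : (fun k : ℕ => (-1:ℝ) ^ (2 * k + 1 + 1 + 1) * a (2 * k + 1 + 1))
        = fun k => -(a (2 * k + 2)) := by
      funext k
      rw [show 2 * k + 1 + 1 + 1 = 2 * (k + 1) + 1 by ring, pow_succ, pow_mul]
      norm_num
    have hgsum_e : Summable (fun k : ℕ => (-1:ℝ) ^ (2 * k + 1 + 1) * a (2 * k + 1)) := by
      rw [hge]; exact hsum_o
    have hgsum_o : Summable (fun k : ℕ => (-1:ℝ) ^ (2 * k + 1 + 1 + 1) * a (2 * k + 1 + 1)) := by
      rw [hgo]; exact hsum_o2.neg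
    have key : 0 ≤ ∑' m : ℕ, (-1:ℝ) ^ (m + 1 + 1) * a (m + 1) := by
      rw [← tsum_even_add_odd (f := fun m => (-1:ℝ) ^ (m + 1 + 1) * a (m + 1)) hgsum_e hgsum_o]
      rw [hge, hgo, tsum_neg]
      have : ∑' k : ℕ, a (2 * k + 2) ≤ ∑' k : ℕ, a (2 * k + 1) :=
        Summable.tsum_le_tsum (fun k => hanti _ _ (by omega)) hsum_o2 hsum_o
      linarith
    have hshift : S = (-1:ℝ) ^ (0 + 1) * a 0 + ∑' m : ℕ, (-1:ℝ) ^ (m + 1 + 1) * a (m + 1) := by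
      rw [hS_def]; exact hSalt.tsum_eq_zero_add
    have hg0 : (-1:ℝ) ^ (0 + 1) * a 0 = -(a 0) := by norm_num
    rw [hshift, hg0]
    linarith
  have ha0lt1 : a 0 < 1 := by
    rw [ha 0]
    norm_num
    rw [div_lt_one (by nlinarith)]
    nlinarith
  set T : ℝ := ∑' m : ℕ, a m with hT_def
  have hTpos : 0 < T := Summable.tsum_pos hsum (fun m => (hapos m).le) 0 (hapos 0)
  -- summability of the power series on [0,1]
  have hpow_sum : ∀ r : ℝ, 0 ≤ r → r ≤ 1 → Summable (fun m : ℕ => 2 * a m * r ^ (m + 2)) := by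
    intro r h0 h1
    refine Summable.of_nonneg_of_le (fun m => ?_) (fun m => ?_) (hsum.mul_left 2)
    · exact mul_nonneg (by nlinarith [hapos m]) (pow_nonneg h0 _)
    · have : r ^ (m + 2) ≤ 1 := pow_le_one₀ h0 h1
      nlinarith [hapos m]
  -- values at the endpoints
  have hK0 : K₁ 0 = -1 - S := by
    rw [hK 0]
    have h0 : ∑' m : ℕ, 2 * c (m + 2) * (0:ℝ) ^ (m + 2) = 0 := by
      simp [pow_succ]
    rw [h0]; ring_nf
  have hK1' : K₁ 1 = 2 * T - S := by
    rw [hK 1]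
    have h1 : ∑' m : ℕ, 2 * c (m + 2) * (1:ℝ) ^ (m + 2) = 2 * T := by
      rw [hT_def, ← tsum_mul_left]
      congr 1; funext m; rw [one_pow, mul_one]
    rw [h1]; ring_nf
  have hK0neg : K₁ 0 < 0 := by rw [hK0]; linarith
  have hK1pos : 0 < K₁ 1 := by rw [hK1']; linarith
  -- strict monotonicity on (0,1)
  have hmono : StrictMonoOn K₁ (Ioo 0 1) := by
    intro x hx y hy hxy
    rw [hK x, hK y]
    have hts : ∑' m : ℕ, 2 * c (m + 2) * x ^ (m + 2) ≤ ∑' m : ℕ, 2 * c (m + 2) * y ^ (m + 2) := by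
      refine Summable.tsum_le_tsum (fun m => ?_) (hpow_sum x hx.1.le hx.2.le) (hpow_sum y hy.1.le hy.2.le)
      have hp : x ^ (m + 2) ≤ y ^ (m + 2) := pow_le_pow_left₀ hx.1.le hxy.le _
      nlinarith [hapos m]
    linarith
  -- continuity on [0,1]
  have hcont : ContinuousOn K₁ (Icc 0 1) := by
    have hG : Continuous fun x : Icc (0:ℝ) 1 => ∑' m : ℕ, 2 * c (m + 2) * ((x : ℝ)) ^ (m + 2) := by
      apply continuous_tsum (u := fun m => 2 * a m)
      · intro m
        exact (continuous_const.mul ((continuous_subtype_val).pow (m + 2)))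
      · exact hsum.mul_left 2
      · intro m x
        have h0 : (0:ℝ) ≤ (x : ℝ) := x.2.1
        have h1 : (x : ℝ) ≤ 1 := x.2.2
        have hc2 : c (m + 2) = a m := rfl
        rw [hc2, Real.norm_eq_abs,
          abs_of_nonneg (mul_nonneg (by nlinarith [hapos m]) (pow_nonneg h0 _))]
        have : (x:ℝ) ^ (m + 2) ≤ 1 := pow_le_one₀ h0 h1
        nlinarith [hapos m]
    rw [continuousOn_iff_continuous_restrict]
    have heq : (Icc (0:ℝ) 1).domRestrict K₁
        = fun x : Icc (0:ℝ) 1 => (x : ℝ) + (∑' m : ℕ, 2 * c (m + 2) * ((x:ℝ)) ^ (m + 2)) - 1 - S := by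
      funext x; simp only [domRestrict_apply]; rw [hK (x : ℝ)]
    rw [heq]
    exact ((continuous_subtype_val.add hG).sub continuous_const).sub continuous_const
  -- existence and uniqueness of the root
  have hroot : ∃ r : ℝ, r ∈ Ioo (0:ℝ) 1 ∧ K₁ r = 0 := by
    have h0mem : (0:ℝ) ∈ Ioo (K₁ 0) (K₁ 1) := ⟨hK0neg, hK1pos⟩
    obtain ⟨r, hr, hKr⟩ := intermediate_value_Ioo (by norm_num : (0:ℝ) ≤ 1) hcont h0mem
    exact ⟨r, hr, hKr⟩
  refine ⟨hmono, hK0neg, hK1pos, ?_⟩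
  obtain ⟨r, hr, hKr⟩ := hroot
  refine ⟨r, ⟨hr, hKr⟩, ?_⟩
  rintro y ⟨hy, hKy⟩
  exact hmono.injOn hy hr (by rw [hKy, hKr])
end

section
/- The function K₂(r) = −r^2 + Li₂(r) + Li₄(r^2) − π²/12 has a unique root in (0,1), and this root is approximately 0.652442 (in particular it lies in the interval (0.65, 0.66)). -/
open Real Set

private lemma base_summable : Summable (fun m : ℕ => 1 / ((m : ℝ) + 1) ^ 2) := by
  have h : Summable (fun n : ℕ => 1 / (n : ℝ) ^ 2) :=
    Real.summable_one_div_nat_pow.mpr one_lt_two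
  have h2 := (summable_nat_add_iff (f := fun n : ℕ => 1 / (n : ℝ) ^ 2) 1).mpr h
  refine h2.congr fun m => ?_
  push_cast
  ring

private lemma sumF (k : ℕ) (hk : 2 ≤ k) (z : ℝ) (h0 : 0 ≤ z) (h1 : z ≤ 1) :
    Summable (fun m : ℕ => z ^ (m + 1) / ((m : ℝ) + 1) ^ k) := by
  refine Summable.of_nonneg_of_le (fun m => by positivity) (fun m => ?_) base_summable
  have hm1 : (1 : ℝ) ≤ (m : ℝ) + 1 := le_add_of_nonneg_left (Nat.cast_nonneg m)
  exact div_le_div₀ (by norm_num) (pow_le_one₀ h0 h1) (by positivity)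
    (pow_le_pow_right₀ hm1 hk)

private lemma sumG (k : ℕ) (hk : 2 ≤ k) (z : ℝ) (h0 : 0 ≤ z) (h1 : z ≤ 1) :
    Summable (fun m : ℕ => z ^ (m + 2) / ((m : ℝ) + 2) ^ k) := by
  have h := (summable_nat_add_iff
    (f := fun m : ℕ => z ^ (m + 1) / ((m : ℝ) + 1) ^ k) 1).mpr (sumF k hk z h0 h1)
  refine h.congr fun m => ?_
  push_cast
  ring_nf

private lemma F_split (k : ℕ) (hk : 2 ≤ k) (z : ℝ) (h0 : 0 ≤ z) (h1 : z ≤ 1) :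
    (∑' m : ℕ, z ^ (m + 1) / ((m : ℝ) + 1) ^ k)
      = z + ∑' m : ℕ, z ^ (m + 2) / ((m : ℝ) + 2) ^ k := by
  rw [Summable.tsum_eq_zero_add (sumF k hk z h0 h1)]
  congr 1
  · simp
  · refine tsum_congr fun m => ?_
    push_cast
    ring_nf

private lemma G_mono (k : ℕ) (hk : 2 ≤ k) (x y : ℝ) (h0 : 0 ≤ x) (hxy : x ≤ y) (h1 : y ≤ 1) :
    (∑' m : ℕ, x ^ (m + 2) / ((m : ℝ) + 2) ^ k)
      ≤ ∑' m : ℕ, y ^ (m + 2) / ((m : ℝ) + 2) ^ k := by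
  refine Summable.tsum_le_tsum (fun m => ?_) (sumG k hk x h0 (hxy.trans h1)) (sumG k hk y (h0.trans hxy) h1)
  exact div_le_div_of_nonneg_right (pow_le_pow_left₀ h0 hxy _) (by positivity) |>.trans_eq rfl

set_option maxHeartbeats 1000000 in
private lemma F_upper (k : ℕ) (hk : 2 ≤ k) (N : ℕ) (z : ℝ) (h0 : 0 ≤ z) (h1 : z < 1) :
    (∑' m : ℕ, z ^ (m + 1) / ((m : ℝ) + 1) ^ k)
      ≤ (∑ m ∈ Finset.range N, z ^ (m + 1) / ((m : ℝ) + 1) ^ k) + z ^ (N + 1) / (1 - z) := by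
  have hs := sumF k hk z h0 h1.le
  rw [← Summable.sum_add_tsum_nat_add N hs]
  refine add_le_add (le_refl _) ?_
  have hgeo : Summable (fun i : ℕ => z ^ (N + 1) * z ^ i) :=
    (summable_geometric_of_lt_one h0 h1).mul_left _
  have hle : (∑' i : ℕ, z ^ (i + N + 1) / ((↑(i + N) : ℝ) + 1) ^ k)
      ≤ ∑' i : ℕ, z ^ (N + 1) * z ^ i := by
    refine Summable.tsum_le_tsum (fun i => ?_) ((summable_nat_add_iff N).mpr hs) hgeo
    have hd : (1 : ℝ) ≤ ((↑(i + N) : ℝ) + 1) ^ k :=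
      one_le_pow₀ (le_add_of_nonneg_left (Nat.cast_nonneg _))
    calc z ^ (i + N + 1) / ((↑(i + N) : ℝ) + 1) ^ k
        ≤ z ^ (i + N + 1) / 1 := by gcongr
      _ = z ^ (N + 1) * z ^ i := by rw [div_one, ← pow_add]; ring_nf
  calc (∑' i : ℕ, z ^ (i + N + 1) / ((↑(i + N) : ℝ) + 1) ^ k)
      ≤ ∑' i : ℕ, z ^ (N + 1) * z ^ i := hle
    _ = z ^ (N + 1) * (1 - z)⁻¹ := by
        rw [tsum_mul_left, tsum_geometric_of_lt_one h0 h1]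
    _ = z ^ (N + 1) / (1 - z) := (div_eq_mul_inv _ _).symm

private lemma F_lower (k : ℕ) (hk : 2 ≤ k) (N : ℕ) (z : ℝ) (h0 : 0 ≤ z) (h1 : z ≤ 1) :
    (∑ m ∈ Finset.range N, z ^ (m + 1) / ((m : ℝ) + 1) ^ k)
      ≤ ∑' m : ℕ, z ^ (m + 1) / ((m : ℝ) + 1) ^ k :=
  Summable.sum_le_tsum _ (fun m _ => by positivity) (sumF k hk z h0 h1)

theorem K2_unique_root
    (K₂ : ℝ → ℝ)
    (hK : ∀ r : ℝ, K₂ r =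
      -r ^ 2 + (∑' m : ℕ, r ^ (m + 1) / ((m : ℝ) + 1) ^ 2)
        + (∑' m : ℕ, (r ^ 2) ^ (m + 1) / ((m : ℝ) + 1) ^ 4) - π ^ 2 / 12) :
    (∃! r : ℝ, r ∈ Ioo (0 : ℝ) 1 ∧ K₂ r = 0) ∧
      (∀ r : ℝ, r ∈ Ioo (0 : ℝ) 1 → K₂ r = 0 → r ∈ Ioo (0.65 : ℝ) 0.66) := by
  -- strict monotonicity on Icc 0 1
  have hmono : StrictMonoOn K₂ (Icc (0:ℝ) 1) := by
    intro x hx y hy hxy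
    have hx0 : (0:ℝ) ≤ x := hx.1
    have hy1 : y ≤ 1 := hy.2
    have hy0 : (0:ℝ) ≤ y := hx0.trans hxy.le
    have hx1 : x ≤ 1 := hxy.le.trans hy1
    have e1 := F_split 2 (le_refl 2) x hx0 hx1
    have e2 := F_split 2 (le_refl 2) y hy0 hy1
    have e3 := F_split 4 (by norm_num) (x ^ 2) (by positivity) (by nlinarith)
    have e4 := F_split 4 (by norm_num) (y ^ 2) (by positivity) (by nlinarith)
    have g2 := G_mono 2 (le_refl 2) x y hx0 hxy.le hy1
    have g4 := G_mono 4 (by norm_num) (x ^ 2) (y ^ 2) (by positivity)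
      (by nlinarith) (by nlinarith)
    rw [hK x, hK y, e1, e2, e3, e4]
    nlinarith
  -- numeric bounds
  have hpi_lb : (9.8695877 : ℝ) < π ^ 2 := by nlinarith [pi_gt_d6, pi_pos]
  have hpi_ub : π ^ 2 < (9.8696099 : ℝ) := by nlinarith [pi_lt_d6, pi_pos]
  have h65 : K₂ 0.65 < 0 := by
    rw [hK]
    have hU2 := F_upper 2 (le_refl 2) 24 (0.65 : ℝ) (by norm_num) (by norm_num)
    have hU4 := F_upper 4 (by norm_num) 10 ((0.65 : ℝ) ^ 2) (by norm_num) (by norm_num)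
    norm_num [Finset.sum_range_succ] at hU2 hU4
    nlinarith [hU2, hU4, hpi_lb]
  have h66 : 0 < K₂ 0.66 := by
    rw [hK]
    have hL2 := F_lower 2 (le_refl 2) 24 (0.66 : ℝ) (by norm_num) (by norm_num)
    have hL4 := F_lower 4 (by norm_num) 10 ((0.66 : ℝ) ^ 2) (by norm_num) (by norm_num)
    norm_num [Finset.sum_range_succ] at hL2 hL4
    nlinarith [hL2, hL4, hpi_ub]
  -- continuity on [0.65, 0.66]
  have hcont : ContinuousOn K₂ (Icc (0.65:ℝ) 0.66) := by
    have hKfun : K₂ = fun r : ℝ =>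
        -r ^ 2 + (∑' m : ℕ, r ^ (m + 1) / ((m : ℝ) + 1) ^ 2)
          + (∑' m : ℕ, (r ^ 2) ^ (m + 1) / ((m : ℝ) + 1) ^ 4) - π ^ 2 / 12 :=
      funext hK
    rw [hKfun]
    have c2 : ContinuousOn (fun r : ℝ => ∑' m : ℕ, r ^ (m + 1) / ((m : ℝ) + 1) ^ 2)
        (Icc (0.65:ℝ) 0.66) := by
      refine continuousOn_tsum (u := fun m : ℕ => (0.66:ℝ) ^ m * 0.66)
        (fun m => (by fun_prop : Continuous fun r : ℝ => r ^ (m + 1) / ((m : ℝ) + 1) ^ 2).continuousOn)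
        (((summable_geometric_of_lt_one (by norm_num) (by norm_num)).mul_right _))
        (fun m r hr => ?_)
      have h1 : (0:ℝ) ≤ r := le_trans (by norm_num) hr.1
      have h2 : r ≤ 0.66 := hr.2
      have hd : (1 : ℝ) ≤ ((m : ℝ) + 1) ^ 2 :=
        one_le_pow₀ (le_add_of_nonneg_left (Nat.cast_nonneg _))
      rw [Real.norm_eq_abs, abs_of_nonneg (by positivity)]
      calc r ^ (m + 1) / ((m : ℝ) + 1) ^ 2 ≤ r ^ (m + 1) / 1 := by
            gcongr
        _ = r ^ (m + 1) := div_one _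
        _ ≤ (0.66:ℝ) ^ (m + 1) := pow_le_pow_left₀ h1 h2 _
        _ = (0.66:ℝ) ^ m * 0.66 := pow_succ _ _
    have c4 : ContinuousOn (fun r : ℝ => ∑' m : ℕ, (r ^ 2) ^ (m + 1) / ((m : ℝ) + 1) ^ 4)
        (Icc (0.65:ℝ) 0.66) := by
      refine continuousOn_tsum (u := fun m : ℕ => (0.44:ℝ) ^ m * 0.44)
        (fun m => (by fun_prop : Continuous fun r : ℝ => (r ^ 2) ^ (m + 1) / ((m : ℝ) + 1) ^ 4).continuousOn)
        (((summable_geometric_of_lt_one (by norm_num) (by norm_num)).mul_right _))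
        (fun m r hr => ?_)
      have h1 : (0:ℝ) ≤ r := le_trans (by norm_num) hr.1
      have h2 : r ≤ 0.66 := hr.2
      have hsq : r ^ 2 ≤ 0.44 := by nlinarith
      have hd : (1 : ℝ) ≤ ((m : ℝ) + 1) ^ 4 :=
        one_le_pow₀ (le_add_of_nonneg_left (Nat.cast_nonneg _))
      rw [Real.norm_eq_abs, abs_of_nonneg (by positivity)]
      calc (r ^ 2) ^ (m + 1) / ((m : ℝ) + 1) ^ 4 ≤ (r ^ 2) ^ (m + 1) / 1 := by
            gcongr
        _ = (r ^ 2) ^ (m + 1) := div_one _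
        _ ≤ (0.44:ℝ) ^ (m + 1) := pow_le_pow_left₀ (by positivity) hsq _
        _ = (0.44:ℝ) ^ m * 0.44 := pow_succ _ _
    fun_prop
  -- IVT
  obtain ⟨c, hc, hc0⟩ := intermediate_value_Ioo (by norm_num : (0.65:ℝ) ≤ 0.66) hcont
    (⟨h65, h66⟩ : (0:ℝ) ∈ Ioo (K₂ 0.65) (K₂ 0.66))
  have hc01 : c ∈ Ioo (0:ℝ) 1 := ⟨by linarith [hc.1], by linarith [hc.2]⟩
  have huniq : ∀ r : ℝ, r ∈ Ioo (0:ℝ) 1 → K₂ r = 0 → r = c := by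
    intro r hr hr0
    exact hmono.injOn (mem_Icc_of_Ioo hr) (mem_Icc_of_Ioo hc01) (by rw [hr0, hc0])
  refine ⟨⟨c, ⟨hc01, hc0⟩, fun r hr => huniq r hr.1 hr.2⟩, fun r hr hr0 => ?_⟩
  rw [huniq r hr hr0]
  exact hc
end

section
/- The function K₃(r) = r − 2r^2 + 2·Li₂(r^2) − 4 + (1 − 2/r^2)·log(1 − r^2) − π²/6 + 4·log 2, defined for r ∈ (0,1), is strictly increasing and has a unique root in (0,1), which lies in the interval (0.67, 0.68). -/
open Real Set



noncomputable def Kc (m : ℕ) : ℝ := 2 / (m : ℝ) ^ 2 - 1 / (m : ℝ) + 2 / ((m : ℝ) + 1)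

lemma Kc_eq (n : ℕ) : Kc (n + 2) =
    (((n:ℝ)+2)^2 + ((n:ℝ)+2) + 2) / (((n:ℝ)+2)^2 * (((n:ℝ)+2)+1)) := by
  unfold Kc
  push_cast
  field_simp
  ring

lemma Kc_pos (n : ℕ) : 0 < Kc (n + 2) := by
  rw [Kc_eq]; positivity

lemma Kc_le_one (n : ℕ) : Kc (n + 2) ≤ 1 := by
  rw [Kc_eq, div_le_one (by positivity)]
  nlinarith [Nat.cast_nonneg (α := ℝ) n]

lemma hasSum_shift {f : ℕ → ℝ} {a : ℝ} (h : HasSum f a) :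
    HasSum (fun n => f (n + 1)) (a - f 0) := by
  rw [hasSum_nat_add_iff 1]
  simpa using h

lemma Li2_summable {x : ℝ} (h0 : 0 ≤ x) (h1 : x < 1) :
    Summable (fun m : ℕ => x ^ (m + 1) / ((m : ℝ) + 1) ^ 2) := by
  refine Summable.of_nonneg_of_le (fun n => by positivity) (fun n => ?_)
    ((summable_geometric_of_lt_one h0 h1).mul_left x)
  have h : x ^ (n + 1) / ((n : ℝ) + 1) ^ 2 ≤ x ^ (n + 1) / 1 := by
    apply div_le_div_of_nonneg_left (by positivity) (by norm_num)
    nlinarith [Nat.cast_nonneg (α := ℝ) n]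
  calc x ^ (n + 1) / ((n : ℝ) + 1) ^ 2 ≤ x ^ (n + 1) / 1 := h
    _ = x * x ^ n := by rw [div_one, pow_succ]; ring

lemma Kc_hasSum {x : ℝ} (h0 : 0 < x) (h1 : x < 1) :
    HasSum (fun n : ℕ => Kc (n + 2) * x ^ (n + 2))
      (2 * (∑' m : ℕ, x ^ (m + 1) / ((m : ℝ) + 1) ^ 2) + (1 - 2 / x) * Real.log (1 - x)
        - 2 - 2 * x) := by
  have hxne : x ≠ 0 := ne_of_gt h0
  have hx : |x| < 1 := by rw [abs_of_pos h0]; exact h1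
  have hB : HasSum (fun n : ℕ => x ^ (n + 1) / ((n : ℝ) + 1)) (-Real.log (1 - x)) :=
    Real.hasSum_pow_div_log_of_abs_lt_one hx
  have hA : HasSum (fun n : ℕ => 2 * (x ^ (n + 1) / ((n : ℝ) + 1) ^ 2))
      (2 * (∑' m : ℕ, x ^ (m + 1) / ((m : ℝ) + 1) ^ 2)) :=
    (Li2_summable h0.le h1).hasSum.mul_left 2
  have hB2 : HasSum (fun n : ℕ => (2 / x) * (x ^ (n + 1) / ((n : ℝ) + 1)))
      ((2 / x) * (-Real.log (1 - x))) := hB.mul_left _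
  have hB3 := hasSum_shift hB2
  have hF := (hA.sub hB).add hB3
  have hG := hasSum_shift hF
  convert hG using 1
  · funext n
    rw [Kc_eq]
    push_cast
    have h1ne : ((n:ℝ) + 1 + 1) ≠ 0 := by positivity
    have h2ne : ((n:ℝ) + 1 + 1 + 1) ≠ 0 := by positivity
    field_simp
    ring
  · push_cast
    field_simp
    ring

theorem test2 : True := trivial

set_option maxHeartbeats 1000000 in
theorem K3_strict_mono_unique_root
    (K₃ : ℝ → ℝ)
    (hK : ∀ r : ℝ, K₃ r =
      r - 2 * r ^ 2 + 2 * (∑' m : ℕ, (r ^ 2) ^ (m + 1) / ((m : ℝ) + 1) ^ 2) - 4 +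
        (1 - 2 / r ^ 2) * Real.log (1 - r ^ 2) - π ^ 2 / 6 + 4 * Real.log 2) :
    StrictMonoOn K₃ (Ioo 0 1) ∧ (∃! r : ℝ, r ∈ Ioo (0 : ℝ) 1 ∧ K₃ r = 0) ∧
      (∀ r : ℝ, r ∈ Ioo (0 : ℝ) 1 → K₃ r = 0 → r ∈ Ioo (0.67 : ℝ) 0.68) := by

  -- series representation of K₃
  have hrep : ∀ r : ℝ, r ∈ Ioo (0:ℝ) 1 →
      HasSum (fun n : ℕ => Kc (n + 2) * (r ^ 2) ^ (n + 2))
        (K₃ r - r + (2 + π ^ 2 / 6 - 4 * Real.log 2)) := by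
    intro r hr
    have hx0 : 0 < r ^ 2 := pow_pos hr.1 2
    have hx1 : r ^ 2 < 1 := by nlinarith [hr.1, hr.2]
    have h := Kc_hasSum hx0 hx1
    have hval : K₃ r - r + (2 + π ^ 2 / 6 - 4 * Real.log 2)
        = 2 * (∑' m : ℕ, (r ^ 2) ^ (m + 1) / ((m : ℝ) + 1) ^ 2)
          + (1 - 2 / r ^ 2) * Real.log (1 - r ^ 2) - 2 - 2 * r ^ 2 := by
      rw [hK r]; ring
    rw [hval]
    exact h
  -- strict monotonicity
  have hmono : StrictMonoOn K₃ (Ioo 0 1) := by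
    intro a ha b hb hab
    have ha' := hrep a ha
    have hb' := hrep b hb
    have hle : K₃ a - a + (2 + π ^ 2 / 6 - 4 * Real.log 2)
        ≤ K₃ b - b + (2 + π ^ 2 / 6 - 4 * Real.log 2) := by
      refine hasSum_le (fun n => ?_) ha' hb'
      have h2 : a ^ 2 ≤ b ^ 2 := by nlinarith [ha.1]
      exact mul_le_mul_of_nonneg_left (pow_le_pow_left₀ (by positivity) h2 _) (Kc_pos n).le
    linarith
  -- numeric bounds at 0.67 and 0.68
  have h067 : (0.67 : ℝ) ∈ Ioo (0:ℝ) 1 := by norm_num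
  have h068 : (0.68 : ℝ) ∈ Ioo (0:ℝ) 1 := by norm_num
  have h67 : K₃ 0.67 < 0 := by
    have h := hrep 0.67 h067
    have hsum : Summable (fun n : ℕ => Kc (n + 2) * ((0.67:ℝ) ^ 2) ^ (n + 2)) := h.summable
    have htsum := h.tsum_eq
    -- tail bound
    have htail : (∑' n : ℕ, Kc (n + 8 + 2) * ((0.67:ℝ) ^ 2) ^ (n + 8 + 2))
        ≤ ∑' n : ℕ, ((0.67:ℝ)^2)^10 * ((0.67:ℝ)^2) ^ n := by
      refine Summable.tsum_le_tsum (fun n => ?_) ((summable_nat_add_iff 8).mpr hsum)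
        ((summable_geometric_of_lt_one (by norm_num) (by norm_num)).mul_left _)
      calc Kc (n + 8 + 2) * ((0.67:ℝ) ^ 2) ^ (n + 8 + 2)
          ≤ 1 * ((0.67:ℝ) ^ 2) ^ (n + 8 + 2) :=
            mul_le_mul_of_nonneg_right (Kc_le_one (n + 8)) (by positivity)
        _ = ((0.67:ℝ)^2)^10 * ((0.67:ℝ)^2) ^ n := by rw [one_mul, ← pow_add]; ring_nf
    have hgeo : (∑' n : ℕ, ((0.67:ℝ)^2)^10 * ((0.67:ℝ)^2) ^ n)
        = ((0.67:ℝ)^2)^10 * (1 - (0.67:ℝ)^2)⁻¹ := by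
      rw [tsum_mul_left, tsum_geometric_of_lt_one (by norm_num) (by norm_num)]
    have hsplit := Summable.sum_add_tsum_nat_add (f := fun n : ℕ => Kc (n + 2) * ((0.67:ℝ) ^ 2) ^ (n + 2)) 8 hsum
    have hpart : (∑ i ∈ Finset.range 8, Kc (i + 2) * ((0.67:ℝ) ^ 2) ^ (i + 2)) ≤ 0.1869 := by
      simp only [Finset.sum_range_succ, Finset.sum_range_zero, Kc]
      norm_num
    have hpi := Real.pi_gt_d6
    have hlog2 := Real.log_two_lt_d9
    -- combine
    have : K₃ 0.67 - 0.67 + (2 + π ^ 2 / 6 - 4 * Real.log 2) ≤ 0.1869 + ((0.67:ℝ)^2)^10 * (1 - (0.67:ℝ)^2)⁻¹ := by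
      rw [← htsum, ← hsplit]
      linarith [htail, hpart, hgeo.le, hgeo.ge]
    nlinarith [this, hpi, hlog2, Real.pi_pos]
  have h68 : 0 < K₃ 0.68 := by
    have h := hrep 0.68 h068
    have hsum := h.summable
    have htsum := h.tsum_eq
    have hpart : (0.2008 : ℝ) ≤ ∑ i ∈ Finset.range 8, Kc (i + 2) * ((0.68:ℝ) ^ 2) ^ (i + 2) := by
      simp only [Finset.sum_range_succ, Finset.sum_range_zero, Kc]
      norm_num
    have hlow := Summable.sum_le_tsum (Finset.range 8)
      (fun i _ => mul_nonneg (Kc_pos i).le (by positivity)) hsum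
    have hpi := Real.pi_lt_d6
    have hlog2 := Real.log_two_gt_d9
    rw [htsum] at hlow
    nlinarith [hpart, hlow, hpi, hlog2, Real.pi_pos]
  -- continuity on [0.67, 0.68]
  have hcont : ContinuousOn K₃ (Icc (0.67:ℝ) 0.68) := by
    have hsub : Icc (0.67:ℝ) 0.68 ⊆ Ioo (0:ℝ) 1 := fun y hy => ⟨by linarith [hy.1], by linarith [hy.2]⟩
    have hT : ContinuousOn (fun r : ℝ => ∑' n : ℕ, Kc (n + 2) * (r ^ 2) ^ (n + 2))
        (Icc (0.67:ℝ) 0.68) := by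
      refine continuousOn_tsum (u := fun n : ℕ => ((0.4624:ℝ)) ^ (n + 2))
        (fun i => (by fun_prop : Continuous fun r : ℝ => Kc (i + 2) * (r ^ 2) ^ (i + 2)).continuousOn)
        ?_ (fun n r hr => ?_)
      · have : Summable (fun n : ℕ => (0.4624:ℝ)^2 * (0.4624:ℝ) ^ n) :=
          (summable_geometric_of_lt_one (by norm_num) (by norm_num)).mul_left _
        refine this.congr fun n => ?_
        rw [← pow_add]; ring_nf
      · have hr2 : r ^ 2 ≤ (0.4624 : ℝ) := by nlinarith [hr.1, hr.2]
        have h0r : (0:ℝ) ≤ r ^ 2 := by positivity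
        rw [Real.norm_eq_abs, abs_of_nonneg (mul_nonneg (Kc_pos n).le (by positivity))]
        calc Kc (n + 2) * (r ^ 2) ^ (n + 2) ≤ 1 * (0.4624:ℝ) ^ (n + 2) :=
              mul_le_mul (Kc_le_one n) (pow_le_pow_left₀ h0r hr2 _) (by positivity) (by norm_num)
          _ = (0.4624:ℝ) ^ (n + 2) := one_mul _
    refine (ContinuousOn.congr (f := fun r : ℝ =>
      r + (∑' n : ℕ, Kc (n + 2) * (r ^ 2) ^ (n + 2)) - (2 + π ^ 2 / 6 - 4 * Real.log 2)) ?_ ?_)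
    · exact (continuousOn_id.add hT).sub continuousOn_const
    · intro y hy
      have h := (hrep y (hsub hy)).tsum_eq
      show K₃ y = y + (∑' n : ℕ, Kc (n + 2) * (y ^ 2) ^ (n + 2)) - (2 + π ^ 2 / 6 - 4 * Real.log 2)
      linarith [h]
  -- existence of root
  obtain ⟨r₀, hr₀I, hr₀⟩ : ∃ r₀ ∈ Ioo (0.67:ℝ) 0.68, K₃ r₀ = 0 := by
    have h := intermediate_value_Ioo (by norm_num : (0.67:ℝ) ≤ 0.68) hcont
    have h0 : (0:ℝ) ∈ Ioo (K₃ 0.67) (K₃ 0.68) := ⟨h67, h68⟩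
    obtain ⟨r₀, hmem, heq⟩ := h h0
    exact ⟨r₀, hmem, heq⟩
  have hr₀01 : r₀ ∈ Ioo (0:ℝ) 1 := ⟨by linarith [hr₀I.1], by linarith [hr₀I.2]⟩
  -- part 3
  have hpart3 : ∀ r : ℝ, r ∈ Ioo (0:ℝ) 1 → K₃ r = 0 → r ∈ Ioo (0.67:ℝ) 0.68 := by
    intro r hr hroot
    constructor
    · by_contra hle
      push_neg at hle
      have := hmono.monotoneOn hr h067 hle
      linarith
    · by_contra hle
      push_neg at hle
      have := hmono.monotoneOn h068 hr hle
      linarith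
  refine ⟨hmono, ⟨r₀, ⟨hr₀01, hr₀⟩, ?_⟩, hpart3⟩
  rintro y ⟨hy01, hy0⟩
  exact hmono.injOn hy01 hr₀01 (by rw [hy0, hr₀])
end

section
/- Assume for all m ≥ 2 the coefficient bounds |a_m| + |b_m| ≤ c_m with c_m = 4(γ−λ)/(m^2(2γ+(δ−γ)(m−1))) and 0 ≤ λ < γ ≤ δ. Let r_p ∈ (0,1) be the unique root of r + Σ_{m≥2} c_m r^m + Σ_{m≥2} c_m^p r^{pm} = 1 + Σ_{m≥2} (−1)^{m−1} c_m (p ≥ 1 fixed). Then for every r ∈ [0, r_p], r + Σ_{m=2}^∞ (|a_m|+|b_m|) r^m + Σ_{m=2}^∞ (|a_m|+|b_m|)^p r^{pm} ≤ 1 + Σ_{m=2}^∞ (−1)^{m−1} c_m. -/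
open Real Set

theorem improved_bohr_inequality (γ δ lam p : ℝ) (hlam : 0 ≤ lam) (hl : lam < γ)
    (hg : γ ≤ δ) (hp : 1 ≤ p)
    (c : ℕ → ℝ)
    (hc : ∀ m : ℕ, c m = 4 * (γ - lam) / ((m : ℝ) ^ 2 * (2 * γ + (δ - γ) * ((m : ℝ) - 1))))
    (a b : ℕ → ℝ) (ha : ∀ m, 0 ≤ a m) (hb : ∀ m, 0 ≤ b m)
    (hab : ∀ m : ℕ, 2 ≤ m → a m + b m ≤ c m)
    (rp : ℝ) (hrp : rp ∈ Ioo (0 : ℝ) 1)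
    (hroot : rp + (∑' m : ℕ, c (m + 2) * rp ^ (m + 2))
        + (∑' m : ℕ, (c (m + 2)) ^ p * rp ^ (p * ((m : ℝ) + 2)))
      = 1 + ∑' m : ℕ, (-1 : ℝ) ^ (m + 1) * c (m + 2))
    (huniq : ∀ r ∈ Ioo (0 : ℝ) 1,
      (r + (∑' m : ℕ, c (m + 2) * r ^ (m + 2))
          + (∑' m : ℕ, (c (m + 2)) ^ p * r ^ (p * ((m : ℝ) + 2)))
        = 1 + ∑' m : ℕ, (-1 : ℝ) ^ (m + 1) * c (m + 2)) → r = rp) :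
    ∀ r ∈ Icc (0 : ℝ) rp,
      r + (∑' m : ℕ, (a (m + 2) + b (m + 2)) * r ^ (m + 2))
          + (∑' m : ℕ, (a (m + 2) + b (m + 2)) ^ p * r ^ (p * ((m : ℝ) + 2)))
        ≤ 1 + ∑' m : ℕ, (-1 : ℝ) ^ (m + 1) * c (m + 2) := by

  intro r hr
  obtain ⟨hr0, hrle⟩ := hr
  obtain ⟨hrp0, hrp1⟩ := hrp
  have hγ : 0 < γ := lt_of_le_of_lt hlam hl
  have hp0 : (0:ℝ) ≤ p := by linarith
  have hden : ∀ m : ℕ, 0 < ((m:ℝ)+2)^2 * (2*γ + (δ-γ)*((m:ℝ)+1)) := by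
    intro m
    have h1 : (0:ℝ) < ((m:ℝ)+2)^2 := by positivity
    have h2 : (0:ℝ) < 2*γ + (δ-γ)*((m:ℝ)+1) := by
      have hm : (0:ℝ) ≤ (m:ℝ) := Nat.cast_nonneg m
      nlinarith
    exact mul_pos h1 h2
  have hcform : ∀ m : ℕ, c (m+2) = 4*(γ-lam) / (((m:ℝ)+2)^2 * (2*γ + (δ-γ)*((m:ℝ)+1))) := by
    intro m
    rw [hc]
    push_cast
    ring_nf
  have hcpos : ∀ m : ℕ, 0 < c (m+2) := by
    intro m; rw [hcform m]; exact div_pos (by linarith) (hden m)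
  have hchalf : ∀ m : ℕ, c (m+2) ≤ 1 := by
    intro m
    rw [hcform m, div_le_iff₀ (hden m)]
    have hm : (0:ℝ) ≤ (m:ℝ) := Nat.cast_nonneg m
    have h4 : (4:ℝ) ≤ ((m:ℝ)+2)^2 := by nlinarith
    have h2 : 2*γ ≤ 2*γ + (δ-γ)*((m:ℝ)+1) := by nlinarith
    have h2' : (0:ℝ) < 2*γ + (δ-γ)*((m:ℝ)+1) := by linarith
    nlinarith
  have hgeo : Summable (fun m : ℕ => rp ^ (m+2)) := by
    have := (summable_geometric_of_lt_one hrp0.le hrp1).mul_left (rp^2)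
    refine this.congr fun m => ?_
    ring
  have hsum_c : Summable (fun m : ℕ => c (m+2) * rp ^ (m+2)) := by
    refine Summable.of_nonneg_of_le (fun m => ?_) (fun m => ?_) hgeo
    · exact mul_nonneg (hcpos m).le (pow_nonneg hrp0.le _)
    · exact mul_le_of_le_one_left (pow_nonneg hrp0.le _) (hchalf m)
  have hrpow_le : ∀ m : ℕ, rp ^ (p * ((m:ℝ)+2)) ≤ rp ^ (m+2) := by
    intro m
    have hm : (0:ℝ) ≤ (m:ℝ) := Nat.cast_nonneg m
    have h1 : rp ^ (p * ((m:ℝ)+2)) ≤ rp ^ (((m:ℝ)+2)) := by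
      apply Real.rpow_le_rpow_of_exponent_ge hrp0 hrp1.le
      nlinarith
    calc rp ^ (p * ((m:ℝ)+2)) ≤ rp ^ (((m:ℝ)+2)) := h1
      _ = rp ^ (m+2) := by
          rw [show ((m:ℝ)+2) = ((m+2 : ℕ) : ℝ) by push_cast; ring, Real.rpow_natCast]
  have hsum_cp : Summable (fun m : ℕ => (c (m+2)) ^ p * rp ^ (p * ((m:ℝ)+2))) := by
    refine Summable.of_nonneg_of_le (fun m => ?_) (fun m => ?_) hgeo
    · exact mul_nonneg (Real.rpow_nonneg (hcpos m).le _) (Real.rpow_nonneg hrp0.le _)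
    · calc (c (m+2)) ^ p * rp ^ (p * ((m:ℝ)+2))
          ≤ 1 * rp ^ (m+2) := by
            apply mul_le_mul (Real.rpow_le_one (hcpos m).le (hchalf m) hp0) (hrpow_le m)
              (Real.rpow_nonneg hrp0.le _) one_pos.le
        _ = rp ^ (m+2) := one_mul _
  have hab' : ∀ m : ℕ, a (m+2) + b (m+2) ≤ c (m+2) := fun m => hab (m+2) (by omega)
  have habnn : ∀ m : ℕ, 0 ≤ a (m+2) + b (m+2) := fun m => add_nonneg (ha _) (hb _)
  have h1 : ∀ m : ℕ, (a (m+2) + b (m+2)) * r ^ (m+2) ≤ c (m+2) * rp ^ (m+2) := by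
    intro m
    exact mul_le_mul (hab' m) (pow_le_pow_left₀ hr0 hrle _) (pow_nonneg hr0 _) (hcpos m).le
  have h2 : ∀ m : ℕ, (a (m+2) + b (m+2)) ^ p * r ^ (p * ((m:ℝ)+2))
      ≤ (c (m+2)) ^ p * rp ^ (p * ((m:ℝ)+2)) := by
    intro m
    have he : (0:ℝ) ≤ p * ((m:ℝ)+2) := by positivity
    exact mul_le_mul (Real.rpow_le_rpow (habnn m) (hab' m) hp0)
      (Real.rpow_le_rpow hr0 hrle he) (Real.rpow_nonneg hr0 _)
      (Real.rpow_nonneg (hcpos m).le _)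
  have hA : Summable (fun m : ℕ => (a (m+2) + b (m+2)) * r ^ (m+2)) :=
    Summable.of_nonneg_of_le (fun m => mul_nonneg (habnn m) (pow_nonneg hr0 _)) h1 hsum_c
  have hB : Summable (fun m : ℕ => (a (m+2) + b (m+2)) ^ p * r ^ (p * ((m:ℝ)+2))) :=
    Summable.of_nonneg_of_le
      (fun m => mul_nonneg (Real.rpow_nonneg (habnn m) _) (Real.rpow_nonneg hr0 _)) h2 hsum_cp
  calc r + (∑' m : ℕ, (a (m+2) + b (m+2)) * r ^ (m+2))
        + (∑' m : ℕ, (a (m+2) + b (m+2)) ^ p * r ^ (p * ((m:ℝ)+2)))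
      ≤ rp + (∑' m : ℕ, c (m+2) * rp ^ (m+2))
        + (∑' m : ℕ, (c (m+2)) ^ p * rp ^ (p * ((m:ℝ)+2))) := by
        exact add_le_add (add_le_add hrle (Summable.tsum_le_tsum h1 hA hsum_c))
          (Summable.tsum_le_tsum h2 hB hsum_cp)
    _ = 1 + ∑' m : ℕ, (-1 : ℝ) ^ (m + 1) * c (m + 2) := hroot
end

section
/- Define G₂(r) = −3r + 8·Li₂(r) − 8 + (8 − 8/r)·log(1−r) − 3 − π²/3 + 8·log 2 for r ∈ (0,1). Then G₂ is strictly increasing on (0,1) and has a unique root in (0,1), lying in the interval (0.52, 0.53). -/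
set_option maxHeartbeats 1000000

open Real Set

/-- Summability of the dilog-type series. -/
lemma sumD {r : ℝ} (h0 : 0 ≤ r) (h1 : r < 1) :
    Summable (fun m : ℕ => r ^ (m + 1) / ((m : ℝ) + 1) ^ 2) := by
  refine Summable.of_nonneg_of_le (fun m => by positivity) (fun m => ?_)
    (summable_geometric_of_lt_one h0 h1)
  have h2 : (1 : ℝ) ≤ ((m : ℝ) + 1) ^ 2 := by
    have : (0 : ℝ) ≤ (m : ℝ) := Nat.cast_nonneg m
    nlinarith
  calc r ^ (m + 1) / ((m : ℝ) + 1) ^ 2 ≤ r ^ (m + 1) / 1 := by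
        apply div_le_div_of_nonneg_left (by positivity) one_pos h2
    _ = r ^ (m + 1) := by ring
    _ ≤ r ^ m := by
        rw [pow_succ]
        nlinarith [pow_nonneg h0 m, pow_le_one₀ h0 h1.le (n := m)]

/-- Lower bound on the dilog series by a partial sum. -/
lemma D_lower {r : ℝ} (h0 : 0 ≤ r) (h1 : r < 1) (N : ℕ) :
    ∑ m ∈ Finset.range N, r ^ (m + 1) / ((m : ℝ) + 1) ^ 2 ≤
      ∑' m : ℕ, r ^ (m + 1) / ((m : ℝ) + 1) ^ 2 :=
  Summable.sum_le_tsum _ (fun i _ => by positivity) (sumD h0 h1)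

/-- Upper bound on the dilog series by a partial sum plus a geometric tail. -/
lemma D_upper {r : ℝ} (h0 : 0 ≤ r) (h1 : r < 1) (N : ℕ) :
    ∑' m : ℕ, r ^ (m + 1) / ((m : ℝ) + 1) ^ 2 ≤
      ∑ m ∈ Finset.range N, r ^ (m + 1) / ((m : ℝ) + 1) ^ 2 +
        r ^ (N + 1) / (((N : ℝ) + 1) ^ 2 * (1 - r)) := by
  have hs := sumD h0 h1
  have hs2 : Summable (fun i : ℕ => r ^ (i + N + 1) / (((i + N : ℕ) : ℝ) + 1) ^ 2) :=
    (summable_nat_add_iff N).mpr hs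
  have hgeo : Summable (fun i : ℕ => r ^ (N + 1) / ((N : ℝ) + 1) ^ 2 * r ^ i) :=
    (summable_geometric_of_lt_one h0 h1).mul_left _
  have hterm : ∀ i : ℕ, r ^ (i + N + 1) / (((i + N : ℕ) : ℝ) + 1) ^ 2 ≤
      r ^ (N + 1) / ((N : ℝ) + 1) ^ 2 * r ^ i := by
    intro i
    push_cast
    have hstep : r ^ (i + N + 1) / ((i : ℝ) + (N : ℝ) + 1) ^ 2 ≤
        r ^ (i + N + 1) / ((N : ℝ) + 1) ^ 2 := by
      refine div_le_div_of_nonneg_left (pow_nonneg h0 _) (by positivity) ?_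
      nlinarith [Nat.cast_nonneg (α := ℝ) i, Nat.cast_nonneg (α := ℝ) N]
    have heq : r ^ (i + N + 1) / ((N : ℝ) + 1) ^ 2 =
        r ^ (N + 1) / ((N : ℝ) + 1) ^ 2 * r ^ i := by
      rw [show i + N + 1 = N + 1 + i from by ring, pow_add]
      ring
    linarith
  have htail : ∑' i : ℕ, r ^ (i + N + 1) / (((i + N : ℕ) : ℝ) + 1) ^ 2 ≤
      r ^ (N + 1) / (((N : ℝ) + 1) ^ 2 * (1 - r)) := by
    refine le_trans (Summable.tsum_le_tsum hterm hs2 hgeo) ?_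
    rw [tsum_mul_left, tsum_geometric_of_lt_one h0 h1]
    exact le_of_eq (by rw [div_eq_mul_inv, div_eq_mul_inv, mul_inv, mul_assoc])
  calc ∑' m : ℕ, r ^ (m + 1) / ((m : ℝ) + 1) ^ 2
      = ∑ m ∈ Finset.range N, r ^ (m + 1) / ((m : ℝ) + 1) ^ 2 +
        ∑' i : ℕ, r ^ (i + N + 1) / (((i + N : ℕ) : ℝ) + 1) ^ 2 :=
        (Summable.sum_add_tsum_nat_add N hs).symm
    _ ≤ _ := add_le_add_right htail _

/-- Summability of the log series. -/
lemma sumL {r : ℝ} (h0 : 0 ≤ r) (h1 : r < 1) :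
    Summable (fun m : ℕ => r ^ (m + 1) / ((m : ℝ) + 1)) :=
  (Real.hasSum_pow_div_log_of_abs_lt_one (by rw [abs_of_nonneg h0]; exact h1)).summable

lemma L_eq {r : ℝ} (h0 : 0 ≤ r) (h1 : r < 1) :
    ∑' m : ℕ, r ^ (m + 1) / ((m : ℝ) + 1) = -Real.log (1 - r) :=
  (Real.hasSum_pow_div_log_of_abs_lt_one (by rw [abs_of_nonneg h0]; exact h1)).tsum_eq

lemma L_lower {r : ℝ} (h0 : 0 ≤ r) (h1 : r < 1) (N : ℕ) :
    ∑ m ∈ Finset.range N, r ^ (m + 1) / ((m : ℝ) + 1) ≤ -Real.log (1 - r) := by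
  rw [← L_eq h0 h1]
  exact Summable.sum_le_tsum _ (fun i _ => by positivity) (sumL h0 h1)

lemma L_upper {r : ℝ} (h0 : 0 ≤ r) (h1 : r < 1) (N : ℕ) :
    -Real.log (1 - r) ≤
      ∑ m ∈ Finset.range N, r ^ (m + 1) / ((m : ℝ) + 1) +
        r ^ (N + 1) / (((N : ℝ) + 1) * (1 - r)) := by
  rw [← L_eq h0 h1]
  have hs := sumL h0 h1
  have hs2 : Summable (fun i : ℕ => r ^ (i + N + 1) / (((i + N : ℕ) : ℝ) + 1)) :=
    (summable_nat_add_iff N).mpr hs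
  have hgeo : Summable (fun i : ℕ => r ^ (N + 1) / ((N : ℝ) + 1) * r ^ i) :=
    (summable_geometric_of_lt_one h0 h1).mul_left _
  have hterm : ∀ i : ℕ, r ^ (i + N + 1) / (((i + N : ℕ) : ℝ) + 1) ≤
      r ^ (N + 1) / ((N : ℝ) + 1) * r ^ i := by
    intro i
    push_cast
    have hstep : r ^ (i + N + 1) / ((i : ℝ) + (N : ℝ) + 1) ≤
        r ^ (i + N + 1) / ((N : ℝ) + 1) := by
      refine div_le_div_of_nonneg_left (pow_nonneg h0 _) (by positivity) ?_
      nlinarith [Nat.cast_nonneg (α := ℝ) i]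
    have heq : r ^ (i + N + 1) / ((N : ℝ) + 1) =
        r ^ (N + 1) / ((N : ℝ) + 1) * r ^ i := by
      rw [show i + N + 1 = N + 1 + i from by ring, pow_add]
      ring
    linarith
  have htail : ∑' i : ℕ, r ^ (i + N + 1) / (((i + N : ℕ) : ℝ) + 1) ≤
      r ^ (N + 1) / (((N : ℝ) + 1) * (1 - r)) := by
    refine le_trans (Summable.tsum_le_tsum hterm hs2 hgeo) ?_
    rw [tsum_mul_left, tsum_geometric_of_lt_one h0 h1]
    exact le_of_eq (by rw [div_eq_mul_inv, div_eq_mul_inv, mul_inv, mul_assoc])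
  calc ∑' m : ℕ, r ^ (m + 1) / ((m : ℝ) + 1)
      = ∑ m ∈ Finset.range N, r ^ (m + 1) / ((m : ℝ) + 1) +
        ∑' i : ℕ, r ^ (i + N + 1) / (((i + N : ℕ) : ℝ) + 1) :=
        (Summable.sum_add_tsum_nat_add N hs).symm
    _ ≤ _ := add_le_add_right htail _

/-- The key series representation of the transcendental part of `G₂`. -/
lemma G2_hasSum {r : ℝ} (h0 : 0 < r) (h1 : r < 1) :
    HasSum (fun m : ℕ => 8 * r ^ (m + 1) / (((m : ℝ) + 1) ^ 2 * ((m : ℝ) + 2)))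
      (8 * (∑' m : ℕ, r ^ (m + 1) / ((m : ℝ) + 1) ^ 2) - 8 +
        (8 - 8 / r) * Real.log (1 - r)) := by
  have habs : |r| < 1 := by rw [abs_of_nonneg h0.le]; exact h1
  have hD : HasSum (fun m : ℕ => r ^ (m + 1) / ((m : ℝ) + 1) ^ 2)
      (∑' m : ℕ, r ^ (m + 1) / ((m : ℝ) + 1) ^ 2) := (sumD h0.le h1).hasSum
  have hL : HasSum (fun m : ℕ => r ^ (m + 1) / ((m : ℝ) + 1)) (-Real.log (1 - r)) :=
    Real.hasSum_pow_div_log_of_abs_lt_one habs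
  have hshift : HasSum (fun n : ℕ => r ^ (n + 2) / ((n : ℝ) + 2)) (-Real.log (1 - r) - r) := by
    have h3 := (hasSum_nat_add_iff (f := fun m : ℕ => r ^ (m + 1) / ((m : ℝ) + 1)) 1
      (g := -Real.log (1 - r) - r)).mpr
    have h2 : -Real.log (1 - r) - r +
        ∑ i ∈ Finset.range 1, r ^ (i + 1) / ((i : ℝ) + 1) = -Real.log (1 - r) := by
      rw [Finset.sum_range_one]
      norm_num
    rw [h2] at h3
    have h4 := h3 hL
    convert h4 using 2 with n
    · rfl
    push_cast
    ring_nf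
  have hM : HasSum (fun n : ℕ => r ^ (n + 1) / ((n : ℝ) + 2))
      ((-Real.log (1 - r) - r) / r) := by
    have h5 := hshift.div_const r
    convert h5 using 2 with n
    · rfl
    have hr : r ≠ 0 := ne_of_gt h0
    field_simp
    ring
  have hsum := ((hD.mul_left 8).sub (hL.mul_left 8)).add (hM.mul_left 8)
  have hval : 8 * (∑' m : ℕ, r ^ (m + 1) / ((m : ℝ) + 1) ^ 2) - 8 * -Real.log (1 - r) +
      8 * ((-Real.log (1 - r) - r) / r) =
      8 * (∑' m : ℕ, r ^ (m + 1) / ((m : ℝ) + 1) ^ 2) - 8 +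
        (8 - 8 / r) * Real.log (1 - r) := by
    field_simp
    ring
  rw [hval] at hsum
  convert hsum using 2 with m
  · rfl
  have hm1 : ((m : ℝ) + 1) ≠ 0 := by positivity
  have hm2 : ((m : ℝ) + 2) ≠ 0 := by positivity
  field_simp
  ring

theorem G2_strict_mono_unique_root
    (G₂ : ℝ → ℝ)
    (hG : ∀ r : ℝ, G₂ r =
      -3 * r + 8 * (∑' m : ℕ, r ^ (m + 1) / ((m : ℝ) + 1) ^ 2) - 8 +
        (8 - 8 / r) * Real.log (1 - r) - 3 - π ^ 2 / 3 + 8 * Real.log 2) :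
    StrictMonoOn G₂ (Ioo 0 1) ∧ (∃! r : ℝ, r ∈ Ioo (0 : ℝ) 1 ∧ G₂ r = 0) ∧
      (∀ r : ℝ, r ∈ Ioo (0 : ℝ) 1 → G₂ r = 0 → r ∈ Ioo (0.52 : ℝ) 0.53) := by
  -- strict monotonicity
  have hmono : StrictMonoOn G₂ (Ioo 0 1) := by
    intro a ha b hb hab
    have hFa := G2_hasSum ha.1 ha.2
    have hFb := G2_hasSum hb.1 hb.2
    have hdiff := hFb.sub hFa
    have h0th := le_hasSum hdiff 0 (fun j _ => by
      have hple : a ^ (j + 1) ≤ b ^ (j + 1) := pow_le_pow_left₀ ha.1.le hab.le _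
      have hle : 8 * a ^ (j + 1) / (((j : ℝ) + 1) ^ 2 * ((j : ℝ) + 2)) ≤
          8 * b ^ (j + 1) / (((j : ℝ) + 1) ^ 2 * ((j : ℝ) + 2)) := by
        gcongr
      linarith)
    simp only [Nat.cast_zero, pow_one] at h0th
    norm_num at h0th
    rw [hG a, hG b]
    linarith
  -- numeric facts
  have h52mem : (0.52 : ℝ) ∈ Ioo (0 : ℝ) 1 := by norm_num
  have h53mem : (0.53 : ℝ) ∈ Ioo (0 : ℝ) 1 := by norm_num
  have h52a : (0 : ℝ) ≤ 0.52 := by norm_num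
  have h52b : (0.52 : ℝ) < 1 := by norm_num
  have h53a : (0 : ℝ) ≤ 0.53 := by norm_num
  have h53b : (0.53 : ℝ) < 1 := by norm_num
  have hD52hi : (∑' m : ℕ, (0.52 : ℝ) ^ (m + 1) / ((m : ℝ) + 1) ^ 2) ≤ 0.6102162 := by
    refine (D_upper h52a h52b 18).trans ?_
    norm_num [Finset.sum_range_succ]
  have hL52hi : -Real.log (1 - 0.52) ≤ (0.7339693 : ℝ) := by
    refine (L_upper h52a h52b 18).trans ?_
    norm_num [Finset.sum_range_succ]
  have hD53lo : (0.6243960 : ℝ) ≤ ∑' m : ℕ, (0.53 : ℝ) ^ (m + 1) / ((m : ℝ) + 1) ^ 2 := by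
    refine le_trans ?_ (D_lower h53a h53b 18)
    norm_num [Finset.sum_range_succ]
  have hL53lo : (0.7550219 : ℝ) ≤ -Real.log (1 - 0.53) := by
    refine le_trans ?_ (L_lower h53a h53b 18)
    norm_num [Finset.sum_range_succ]
  have hpi_lo := Real.pi_gt_d6
  have hpi_hi := Real.pi_lt_d6
  have hlog2_lo := Real.log_two_gt_d9
  have hlog2_hi := Real.log_two_lt_d9
  have hG52 : G₂ 0.52 < 0 := by
    rw [hG 0.52]
    have hc : (8 : ℝ) - 8 / 0.52 = -(96 / 13) := by norm_num
    rw [hc]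
    have hterm : -(96 / 13 : ℝ) * Real.log (1 - 0.52) ≤ 96 / 13 * 0.7339693 := by
      nlinarith [hL52hi]
    nlinarith [hD52hi, hterm, hpi_lo, Real.pi_pos, hlog2_hi]
  have hG53 : 0 < G₂ 0.53 := by
    rw [hG 0.53]
    have hc : (8 : ℝ) - 8 / 0.53 = -(376 / 53) := by norm_num
    rw [hc]
    have hterm : (376 / 53 : ℝ) * 0.7550219 ≤ -(376 / 53) * Real.log (1 - 0.53) := by
      nlinarith [hL53lo]
    nlinarith [hD53lo, hterm, hpi_hi, Real.pi_pos, hlog2_lo]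
  -- continuity on [0.52, 0.53]
  have hcont : ContinuousOn G₂ (Icc (0.52 : ℝ) 0.53) := by
    have hGfun : G₂ = fun r => -3 * r + 8 * (∑' m : ℕ, r ^ (m + 1) / ((m : ℝ) + 1) ^ 2) - 8 +
        (8 - 8 / r) * Real.log (1 - r) - 3 - π ^ 2 / 3 + 8 * Real.log 2 := funext hG
    rw [hGfun]
    have hu : Summable (fun m : ℕ => 1 / ((m : ℝ) + 1) ^ 2) := by
      have h2 : Summable (fun n : ℕ => 1 / (n : ℝ) ^ 2) :=
        Real.summable_one_div_nat_pow.mpr one_lt_two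
      have h3 := (summable_nat_add_iff 1).mpr h2
      refine h3.congr fun n => ?_
      push_cast
      ring
    have hts : ContinuousOn (fun x : ℝ => ∑' m : ℕ, x ^ (m + 1) / ((m : ℝ) + 1) ^ 2)
        (Icc (0.52 : ℝ) 0.53) := by
      refine continuousOn_tsum (fun i => ?_) hu (fun n x hx => ?_)
      · exact ((continuous_pow (i + 1)).div_const _).continuousOn
      · have hx1 : |x| ≤ 1 := by
          rw [abs_le]; constructor <;> [linarith [hx.1]; linarith [hx.2]]
        rw [norm_div, norm_pow, Real.norm_eq_abs, Real.norm_eq_abs]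
        have h1 : |x| ^ (n + 1) ≤ 1 := pow_le_one₀ (abs_nonneg x) hx1
        have h2 : |((n : ℝ) + 1) ^ 2| = ((n : ℝ) + 1) ^ 2 := abs_of_pos (by positivity)
        rw [h2]
        gcongr
      
    have hlogc : ContinuousOn (fun x : ℝ => Real.log (1 - x)) (Icc (0.52 : ℝ) 0.53) := by
      apply ContinuousOn.log
      · exact (continuous_const.sub continuous_id).continuousOn
      · intro x hx
        have h2 : x ≤ 0.53 := hx.2
        have : (0:ℝ) < 1 - x := by norm_num at h2 ⊢; linarith
        exact ne_of_gt this
    have hdivc : ContinuousOn (fun x : ℝ => (8 : ℝ) - 8 / x) (Icc (0.52 : ℝ) 0.53) := by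
      have hne : ∀ x ∈ Icc (0.52 : ℝ) 0.53, x ≠ 0 := by
        intro x hx
        have h1 : (0.52:ℝ) ≤ x := hx.1
        have : (0:ℝ) < x := by norm_num at h1 ⊢; linarith
        exact ne_of_gt this
      exact continuousOn_const.sub (continuousOn_const.div
        (continuous_id.continuousOn) hne)
    exact ((((((continuous_const.mul continuous_id).continuousOn.add
      (continuousOn_const.mul hts)).sub continuousOn_const).add
      (hdivc.mul hlogc)).sub continuousOn_const).sub continuousOn_const).add
      continuousOn_const
  -- IVT
  have hivt : (0 : ℝ) ∈ G₂ '' Ioo (0.52 : ℝ) 0.53 :=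
    intermediate_value_Ioo (by norm_num) hcont ⟨hG52, hG53⟩
  obtain ⟨c, hcmem, hc0⟩ := hivt
  have hc01 : c ∈ Ioo (0 : ℝ) 1 := ⟨by linarith [hcmem.1], by linarith [hcmem.2]⟩
  refine ⟨hmono, ⟨c, ⟨hc01, hc0⟩, fun y hy => ?_⟩, fun r hr hr0 => ?_⟩
  · exact hmono.injOn hy.1 hc01 (hy.2.trans hc0.symm)
  · constructor
    · by_contra h
      push_neg at h
      have hle : G₂ r ≤ G₂ 0.52 := hmono.monotoneOn hr h52mem h
      linarith
    · by_contra h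
      push_neg at h
      have hle : G₂ 0.53 ≤ G₂ r := hmono.monotoneOn h53mem hr h
      linarith
end

section
/- Define G_g(r) = −r + 4·Li₂(r) − 4 + (4 − 4/r)·log(1−r) − 3 − π²/3 + 8·log 2 for r ∈ (0,1). Then G_g is strictly increasing and has a unique root in (0,1), lying in the interval (0.59, 0.60). -/
open Real Set

noncomputable def fT (r : ℝ) (m : ℕ) : ℝ := 4 * r ^ (m + 1) / (((m : ℝ) + 1) ^ 2 * ((m : ℝ) + 2))

lemma fT_nonneg {r : ℝ} (hr : 0 ≤ r) (m : ℕ) : 0 ≤ fT r m := by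
  unfold fT; positivity

lemma fT_mono {a b : ℝ} (ha : 0 ≤ a) (hab : a ≤ b) (m : ℕ) : fT a m ≤ fT b m := by
  unfold fT; gcongr

lemma summable_u : Summable (fun m : ℕ => 4 / (((m : ℝ) + 1) ^ 2)) := by
  have h : Summable (fun m : ℕ => 1 / ((m : ℝ) + 1) ^ 2) := by
    have := (summable_nat_add_iff (f := fun n : ℕ => 1 / (n : ℝ) ^ 2) 1).mpr
      (Real.summable_one_div_nat_pow.mpr one_lt_two)
    simpa using this
  simpa [div_eq_mul_inv] using h.mul_left 4

lemma fT_le_u {r : ℝ} (hr0 : 0 ≤ r) (hr1 : r ≤ 1) (m : ℕ) :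
    fT r m ≤ 4 / (((m : ℝ) + 1) ^ 2) := by
  unfold fT
  rw [div_le_div_iff₀ (by positivity) (by positivity)]
  have h1 : r ^ (m + 1) ≤ 1 := pow_le_one₀ hr0 hr1
  nlinarith [sq_nonneg ((m : ℝ) + 1), pow_nonneg hr0 (m + 1),
    mul_nonneg (sq_nonneg ((m : ℝ) + 1)) (pow_nonneg hr0 (m + 1))]

lemma summable_fT {r : ℝ} (hr0 : 0 ≤ r) (hr1 : r ≤ 1) : Summable (fT r) :=
  Summable.of_nonneg_of_le (fT_nonneg hr0) (fT_le_u hr0 hr1) summable_u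

lemma tsum_fT_lower {r : ℝ} (hr0 : 0 ≤ r) (hr1 : r ≤ 1) :
    ∑ m ∈ Finset.range 12, fT r m ≤ ∑' m : ℕ, fT r m :=
  Summable.sum_le_tsum _ (fun i _ => fT_nonneg hr0 i) (summable_fT hr0 hr1)

lemma tsum_fT_upper {r : ℝ} (hr0 : 0 ≤ r) (hr1 : r < 1) :
    ∑' m : ℕ, fT r m ≤ ∑ m ∈ Finset.range 12, fT r m + 4 * r ^ 13 / 2366 * (1 - r)⁻¹ := by
  have hsum := summable_fT hr0 hr1.le
  rw [← Summable.sum_add_tsum_nat_add 12 hsum]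
  gcongr
  have hgeom : Summable (fun m : ℕ => 4 * r ^ 13 / 2366 * r ^ m) :=
    (summable_geometric_of_lt_one hr0 hr1).mul_left _
  have htail : Summable (fun m : ℕ => fT r (m + 12)) :=
    (summable_nat_add_iff 12).mpr hsum
  calc ∑' m : ℕ, fT r (m + 12) ≤ ∑' m : ℕ, 4 * r ^ 13 / 2366 * r ^ m := by
        refine Summable.tsum_le_tsum (fun m => ?_) htail hgeom
        unfold fT
        have h1 : (2366 : ℝ) ≤ ((m : ℝ) + 12 + 1) ^ 2 * ((m : ℝ) + 12 + 2) := by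
          nlinarith [Nat.cast_nonneg (α := ℝ) m]
        have h2 : r ^ (m + 12 + 1) = r ^ 13 * r ^ m := by ring
        rw [h2, div_le_iff₀ (by positivity)]
        have h3 : 4 * r ^ 13 / 2366 * r ^ m * 2366 ≤
            4 * r ^ 13 / 2366 * r ^ m * (((m : ℝ) + 12 + 1) ^ 2 * ((m : ℝ) + 12 + 2)) := by
          gcongr
        push_cast
        calc 4 * (r ^ 13 * r ^ m) = 4 * r ^ 13 / 2366 * r ^ m * 2366 := by ring
          _ ≤ _ := h3
      _ = 4 * r ^ 13 / 2366 * (1 - r)⁻¹ := by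
        rw [tsum_mul_left, tsum_geometric_of_lt_one hr0 hr1]

lemma key {r : ℝ} (hr : r ∈ Ioo (0 : ℝ) 1) :
    -r + 4 * (∑' m : ℕ, r ^ (m + 1) / ((m : ℝ) + 1) ^ 2) - 4 +
      (4 - 4 / r) * Real.log (1 - r) = -r + ∑' m : ℕ, fT r m := by
  obtain ⟨hr0, hr1⟩ := hr
  have habs : |r| < 1 := by rw [abs_of_pos hr0]; exact hr1
  have hL : HasSum (fun n : ℕ => r ^ (n + 1) / ((n : ℝ) + 1)) (-Real.log (1 - r)) :=
    Real.hasSum_pow_div_log_of_abs_lt_one habs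
  have hSsum : Summable (fun n : ℕ => r ^ (n + 1) / ((n : ℝ) + 1) ^ 2) := by
    refine Summable.of_nonneg_of_le (fun n => by positivity) (fun n => ?_)
      (summable_geometric_of_lt_one hr0.le hr1)
    have h1 : ((1:ℝ)) ≤ ((n : ℝ) + 1) ^ 2 := by nlinarith [Nat.cast_nonneg (α := ℝ) n]
    calc r ^ (n + 1) / ((n : ℝ) + 1) ^ 2 ≤ r ^ (n + 1) / 1 := by
          gcongr
      _ = r ^ n * r := by rw [div_one, pow_succ]
      _ ≤ r ^ n * 1 := by gcongr
      _ = r ^ n := mul_one _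
  have hS : HasSum (fun n : ℕ => r ^ (n + 1) / ((n : ℝ) + 1) ^ 2)
      (∑' m : ℕ, r ^ (m + 1) / ((m : ℝ) + 1) ^ 2) := hSsum.hasSum
  have hL' : HasSum (fun n : ℕ => r ^ n / ((n : ℝ) + 1)) (-Real.log (1 - r) / r) := by
    have := hL.div_const r
    refine this.congr_fun fun n => ?_
    field_simp [pow_succ]
    ring
  have hL'' : HasSum (fun n : ℕ => r ^ (n + 1) / ((n : ℝ) + 2)) (-Real.log (1 - r) / r - 1) := by
    have h0 : HasSum (fun n : ℕ => r ^ n / ((n : ℝ) + 1))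
        ((-Real.log (1 - r) / r - 1) + ∑ i ∈ Finset.range 1, r ^ i / ((i : ℝ) + 1)) := by
      simpa using hL'
    have := (hasSum_nat_add_iff (f := fun n : ℕ => r ^ n / ((n : ℝ) + 1)) 1).mpr h0
    refine this.congr_fun fun n => ?_
    push_cast
    ring_nf
  have hcomb := ((hS.mul_left 4).sub (hL.mul_left 4)).add (hL''.mul_left 4)
  have hterm : ∀ n : ℕ,
      4 * (r ^ (n + 1) / ((n : ℝ) + 1) ^ 2) - 4 * (r ^ (n + 1) / ((n : ℝ) + 1)) +
        4 * (r ^ (n + 1) / ((n : ℝ) + 2)) = fT r n := by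
    intro n
    have h1 : ((n : ℝ) + 1) ≠ 0 := by positivity
    have h2 : ((n : ℝ) + 2) ≠ 0 := by positivity
    unfold fT
    field_simp
    ring
  have hT : HasSum (fT r)
      (4 * (∑' m : ℕ, r ^ (m + 1) / ((m : ℝ) + 1) ^ 2) - 4 * (-Real.log (1 - r)) +
        4 * (-Real.log (1 - r) / r - 1)) := hcomb.congr_fun fun n => (hterm n).symm
  rw [hT.tsum_eq]
  have hrne : r ≠ 0 := ne_of_gt hr0
  field_simp
  ring

lemma num1 : ∑ m ∈ Finset.range 12, fT (59/100 : ℝ) m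
      + 4 * (59/100 : ℝ) ^ 13 / 2366 * (1 - 59/100 : ℝ)⁻¹
    < 3 + π ^ 2 / 3 - 8 * Real.log 2 + 59/100 := by
  have hpi := Real.pi_gt_d6
  have hpi2 : (3.141592 : ℝ) ^ 2 < π ^ 2 := by nlinarith
  have hlog := Real.log_two_lt_d9
  have hsum : ∑ m ∈ Finset.range 12, fT (59/100 : ℝ) m
      + 4 * (59/100 : ℝ) ^ 13 / 2366 * (1 - 59/100 : ℝ)⁻¹ < (132796 : ℝ)/100000 := by
    simp only [fT, Finset.sum_range_succ, Finset.sum_range_zero]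
    norm_num
  nlinarith

lemma num2 : (3 + π ^ 2 / 3 - 8 * Real.log 2 + 3/5 : ℝ)
    < ∑ m ∈ Finset.range 12, fT (3/5 : ℝ) m := by
  have hpi := Real.pi_lt_d6
  have hpi2 : π ^ 2 < (3.141593 : ℝ) ^ 2 := by nlinarith [Real.pi_pos]
  have hlog := Real.log_two_gt_d9
  have hsum : (135378 : ℝ)/100000 < ∑ m ∈ Finset.range 12, fT (3/5 : ℝ) m := by
    simp only [fT, Finset.sum_range_succ, Finset.sum_range_zero]
    norm_num
  nlinarith

theorem Gg_strict_mono_unique_root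
    (Gg : ℝ → ℝ)
    (hG : ∀ r : ℝ, Gg r =
      -r + 4 * (∑' m : ℕ, r ^ (m + 1) / ((m : ℝ) + 1) ^ 2) - 4 +
        (4 - 4 / r) * Real.log (1 - r) - 3 - π ^ 2 / 3 + 8 * Real.log 2) :
    StrictMonoOn Gg (Ioo 0 1) ∧ (∃! r : ℝ, r ∈ Ioo (0 : ℝ) 1 ∧ Gg r = 0) ∧
      (∀ r : ℝ, r ∈ Ioo (0 : ℝ) 1 → Gg r = 0 → r ∈ Ioo (0.59 : ℝ) 0.60) := by
  have hrep : ∀ r ∈ Ioo (0 : ℝ) 1,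
      Gg r = -r + (∑' m : ℕ, fT r m) - 3 - π ^ 2 / 3 + 8 * Real.log 2 := by
    intro r hr
    have := key hr
    rw [hG r]
    linarith
  -- strict monotonicity
  have hmono : StrictMonoOn Gg (Ioo 0 1) := by
    intro a ha b hb hab
    rw [hrep a ha, hrep b hb]
    have hdiff : HasSum (fun m => fT b m - fT a m)
        ((∑' m : ℕ, fT b m) - ∑' m : ℕ, fT a m) :=
      (summable_fT hb.1.le hb.2.le).hasSum.sub (summable_fT ha.1.le ha.2.le).hasSum
    have h0 : fT b 0 - fT a 0 ≤ (∑' m : ℕ, fT b m) - ∑' m : ℕ, fT a m :=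
      le_hasSum hdiff 0 (fun j _ => sub_nonneg.2 (fT_mono ha.1.le hab.le j))
    have he : fT b 0 - fT a 0 = 2 * b - 2 * a := by
      simp only [fT]
      norm_num
      ring
    linarith
  refine ⟨hmono, ?_, ?_⟩
  · -- existence and uniqueness
    have hamem : (59/100 : ℝ) ∈ Ioo (0 : ℝ) 1 := by norm_num
    have hbmem : (3/5 : ℝ) ∈ Ioo (0 : ℝ) 1 := by norm_num
    have hGa : Gg (59/100) < 0 := by
      rw [hrep _ hamem]
      have h1 := tsum_fT_upper (r := 59/100) (by norm_num) (by norm_num)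
      have h2 := num1
      linarith
    have hGb : 0 < Gg (3/5) := by
      rw [hrep _ hbmem]
      have h1 := tsum_fT_lower (r := 3/5) (by norm_num) (by norm_num)
      have h2 := num2
      linarith
    have hTc : ContinuousOn (fun r : ℝ => ∑' m : ℕ, fT r m) (Icc (59/100 : ℝ) (3/5)) := by
      refine continuousOn_tsum (f := fun m r => fT r m) (fun m => ?_) summable_u ?_
      · exact (Continuous.div_const (continuous_const.mul (continuous_pow (m + 1))) _).continuousOn
      · intro n x hx
        have hx0 : (0 : ℝ) ≤ x := le_trans (by norm_num) hx.1
        have hx1 : x ≤ 1 := le_trans hx.2 (by norm_num)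
        rw [Real.norm_eq_abs, abs_of_nonneg (fT_nonneg hx0 n)]
        exact fT_le_u hx0 hx1 n
    have hGc : ContinuousOn Gg (Icc (59/100 : ℝ) (3/5)) := by
      refine ContinuousOn.congr (f := fun r : ℝ =>
        -r + (∑' m : ℕ, fT r m) - 3 - π ^ 2 / 3 + 8 * Real.log 2) ?_ ?_
      · exact ((((continuous_id.neg.continuousOn.add hTc).sub continuousOn_const).sub
          continuousOn_const).add continuousOn_const)
      · intro x hx
        exact hrep x ⟨lt_of_lt_of_le (by norm_num) hx.1, lt_of_le_of_lt hx.2 (by norm_num)⟩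
    have hIVT := intermediate_value_Icc (by norm_num : (59/100 : ℝ) ≤ 3/5) hGc
    have h0mem : (0 : ℝ) ∈ Icc (Gg (59/100)) (Gg (3/5)) := ⟨hGa.le, hGb.le⟩
    obtain ⟨r0, hr0mem, hr0⟩ := hIVT h0mem
    have hr0Ioo : r0 ∈ Ioo (0 : ℝ) 1 :=
      ⟨lt_of_lt_of_le (by norm_num) hr0mem.1, lt_of_le_of_lt hr0mem.2 (by norm_num)⟩
    exact ⟨r0, ⟨hr0Ioo, hr0⟩, fun y hy =>
      hmono.injOn hy.1 hr0Ioo (by rw [hy.2, hr0])⟩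
  · -- localization
    intro r hr hroot
    have hamem : (59/100 : ℝ) ∈ Ioo (0 : ℝ) 1 := by norm_num
    have hbmem : (3/5 : ℝ) ∈ Ioo (0 : ℝ) 1 := by norm_num
    have hGa : Gg (59/100) < 0 := by
      rw [hrep _ hamem]
      have h1 := tsum_fT_upper (r := 59/100) (by norm_num) (by norm_num)
      have h2 := num1
      linarith
    have hGb : 0 < Gg (3/5) := by
      rw [hrep _ hbmem]
      have h1 := tsum_fT_lower (r := 3/5) (by norm_num) (by norm_num)
      have h2 := num2
      linarith
    constructor
    · by_contra h
      push_neg at h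
      have hle : r ≤ (59/100 : ℝ) := by norm_num at h ⊢; linarith
      have := hmono.monotoneOn hr hamem hle
      linarith [hroot ▸ this]
    · by_contra h
      push_neg at h
      have hle : (3/5 : ℝ) ≤ r := by norm_num at h ⊢; linarith
      have := hmono.monotoneOn hbmem hr hle
      linarith [hroot ▸ this]
end

section
/- Let 0 ≤ λ < γ ≤ δ, and let n ≥ 1, N ≥ 2 be integers. Define K*(r) = r^n + Σ_{m=2}^∞ c_m r^{nm} + Σ_{m=N}^∞ c_m r^m − 1 − Σ_{m=2}^∞ (−1)^{m−1} c_m on [0,1], where c_m = 4(γ−λ)/(m^2(2γ+(δ−γ)(m−1))). Then K* is continuous on [0,1], strictly increasing on (0,1), K*(0) < 0, K*(1) > 0, and K* has a unique root in (0,1). -/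
open Real Set

theorem Kstar_unique_root (γ δ lam : ℝ) (hlam : 0 ≤ lam) (hl : lam < γ) (hg : γ ≤ δ)
    (n N : ℕ) (hn : 1 ≤ n) (hN : 2 ≤ N)
    (c : ℕ → ℝ)
    (hc : ∀ m : ℕ, c m = 4 * (γ - lam) / ((m : ℝ) ^ 2 * (2 * γ + (δ - γ) * ((m : ℝ) - 1))))
    (Kstar : ℝ → ℝ)
    (hK : ∀ r : ℝ, Kstar r =
      r ^ n + (∑' m : ℕ, c (m + 2) * r ^ (n * (m + 2)))
        + (∑' m : ℕ, c (m + N) * r ^ (m + N))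
        - 1 - ∑' m : ℕ, (-1 : ℝ) ^ (m + 1) * c (m + 2)) :
    ContinuousOn Kstar (Icc 0 1) ∧ StrictMonoOn Kstar (Ioo 0 1) ∧
      Kstar 0 < 0 ∧ 0 < Kstar 1 ∧ (∃! r : ℝ, r ∈ Ioo (0 : ℝ) 1 ∧ Kstar r = 0) := by
  have hγ : 0 < γ := lt_of_le_of_lt hlam hl
  have hnum : 0 < γ - lam := by linarith
  -- denominator positivity
  have hden : ∀ m : ℕ, 2 ≤ m → 0 < (m : ℝ) ^ 2 * (2 * γ + (δ - γ) * ((m : ℝ) - 1)) := by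
    intro m hm
    have h2 : (2 : ℝ) ≤ (m : ℝ) := by exact_mod_cast hm
    have hd : 0 < 2 * γ + (δ - γ) * ((m : ℝ) - 1) := by nlinarith
    have hm0 : (0 : ℝ) < (m : ℝ) := by linarith
    exact mul_pos (by positivity) hd
  have hcpos : ∀ m : ℕ, 2 ≤ m → 0 < c m := by
    intro m hm
    rw [hc]
    exact div_pos (by linarith) (hden m hm)
  -- c is antitone for m ≥ 2
  have hcmono : ∀ j k : ℕ, 2 ≤ j → j ≤ k → c k ≤ c j := by
    intro j k hj hjk
    have hj2 : (2 : ℝ) ≤ (j : ℝ) := by exact_mod_cast hj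
    have hjk' : (j : ℝ) ≤ (k : ℝ) := by exact_mod_cast hjk
    rw [hc, hc]
    apply div_le_div_of_nonneg_left (by linarith) (hden j hj)
    have h1 : (j:ℝ)^2 ≤ (k:ℝ)^2 := by nlinarith
    have h2 : 2*γ + (δ - γ)*((j:ℝ) - 1) ≤ 2*γ + (δ - γ)*((k:ℝ) - 1) := by
      nlinarith [mul_le_mul_of_nonneg_left (by linarith : (j:ℝ) - 1 ≤ (k:ℝ) - 1)
        (sub_nonneg.2 hg)]
    have h3 : 0 < 2*γ + (δ - γ)*((j:ℝ) - 1) := by nlinarith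
    exact mul_le_mul h1 h2 h3.le (sq_nonneg _)
  -- the upper bound c m ≤ (2(γ-lam)/γ) / m^2
  have hcle : ∀ m : ℕ, 2 ≤ m → c m ≤ 2 * (γ - lam) / γ * (1 / (m : ℝ) ^ 2) := by
    intro m hm
    have h2 : (2 : ℝ) ≤ (m : ℝ) := by exact_mod_cast hm
    rw [hc, div_mul_div_comm, mul_one,
      div_le_div_iff₀ (hden m hm) (by positivity)]
    nlinarith [mul_nonneg (mul_nonneg hnum.le (sq_nonneg (m:ℝ)))
      (mul_nonneg (sub_nonneg.2 hg) (by linarith : (0:ℝ) ≤ (m:ℝ) - 1))]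
  -- summability
  have hbase : Summable (fun m : ℕ => 2 * (γ - lam) / γ * (1 / ((m : ℝ) + 2) ^ 2)) := by
    have h1 : Summable (fun m : ℕ => 1 / ((m : ℝ)) ^ 2) :=
      Real.summable_one_div_nat_pow.mpr one_lt_two
    have h2 := (summable_nat_add_iff 2).mpr h1
    exact (h2.congr fun m => by push_cast; ring).mul_left _
  have ha_sum : Summable (fun m : ℕ => c (m + 2)) := by
    apply Summable.of_nonneg_of_le (fun m => (hcpos _ (by omega)).le) _ hbase
    intro m
    have := hcle (m + 2) (by omega)
    push_cast at this ⊢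
    linarith
  have hb_sum : Summable (fun m : ℕ => c (m + N)) := by
    apply Summable.of_nonneg_of_le (fun m => (hcpos _ (by omega)).le)
      (fun m => hcmono (m + 2) (m + N) (by omega) (by omega)) ha_sum
  have hCsum : Summable (fun m : ℕ => (-1 : ℝ) ^ (m + 1) * c (m + 2)) := by
    apply Summable.of_norm_bounded ha_sum
    intro m
    rw [norm_mul, norm_pow, norm_neg, norm_one, one_pow, one_mul,
      Real.norm_eq_abs, abs_of_nonneg (hcpos _ (by omega)).le]
  -- summability of power series terms
  have hpow_sum : ∀ (g : ℕ → ℝ) (e : ℕ → ℕ), Summable g → (∀ m, 0 ≤ g m) →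
      ∀ r : ℝ, 0 ≤ r → r ≤ 1 → Summable (fun m => g m * r ^ (e m)) := by
    intro g e hg hg0 r hr0 hr1
    apply Summable.of_nonneg_of_le
      (fun m => mul_nonneg (hg0 m) (pow_nonneg hr0 _)) _ hg
    intro m
    calc g m * r ^ (e m) ≤ g m * 1 :=
          mul_le_mul_of_nonneg_left (pow_le_one₀ hr0 hr1) (hg0 m)
      _ = g m := mul_one _
  have ha_nonneg : ∀ m : ℕ, 0 ≤ c (m + 2) := fun m => (hcpos _ (by omega)).le
  have hb_nonneg : ∀ m : ℕ, 0 ≤ c (m + N) := fun m => (hcpos _ (by omega)).le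
  -- continuity
  have hcont : ContinuousOn Kstar (Icc 0 1) := by
    have hKfun : Kstar = fun r : ℝ =>
        r ^ n + (∑' m : ℕ, c (m + 2) * r ^ (n * (m + 2)))
          + (∑' m : ℕ, c (m + N) * r ^ (m + N))
          - 1 - ∑' m : ℕ, (-1 : ℝ) ^ (m + 1) * c (m + 2) := funext hK
    rw [hKfun, continuousOn_iff_continuous_restrict]
    have c1 : Continuous (fun x : Icc (0:ℝ) 1 => (x : ℝ) ^ n) :=
      continuous_subtype_val.pow n
    have key : ∀ (g : ℕ → ℝ) (e : ℕ → ℕ), Summable g → (∀ m, 0 ≤ g m) →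
        Continuous (fun x : Icc (0:ℝ) 1 => ∑' m : ℕ, g m * (x : ℝ) ^ (e m)) := by
      intro g e hg hg0
      apply continuous_tsum (u := g)
      · exact fun m => continuous_const.mul (continuous_subtype_val.pow _)
      · exact hg
      · intro m x
        have hx0 : (0:ℝ) ≤ (x:ℝ) := x.2.1
        have hx1 : (x:ℝ) ≤ 1 := x.2.2
        rw [norm_mul, Real.norm_eq_abs, Real.norm_eq_abs,
          abs_of_nonneg (hg0 m), abs_of_nonneg (pow_nonneg hx0 _)]
        calc g m * (x:ℝ) ^ (e m) ≤ g m * 1 :=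
              mul_le_mul_of_nonneg_left (pow_le_one₀ hx0 hx1) (hg0 m)
          _ = g m := mul_one _
    have c2 := key (fun m => c (m + 2)) (fun m => n * (m + 2)) ha_sum ha_nonneg
    have c3 := key (fun m => c (m + N)) (fun m => m + N) hb_sum hb_nonneg
    exact (((c1.add c2).add c3).sub continuous_const).sub continuous_const
  -- strict monotonicity
  have hmono : StrictMonoOn Kstar (Ioo 0 1) := by
    intro r hr s hs hrs
    rw [hK r, hK s]
    have h1 : r ^ n < s ^ n := pow_lt_pow_left₀ hrs hr.1.le (by omega)
    have h2 : (∑' m : ℕ, c (m + 2) * r ^ (n * (m + 2))) ≤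
        ∑' m : ℕ, c (m + 2) * s ^ (n * (m + 2)) := by
      apply Summable.tsum_le_tsum _
        (hpow_sum _ _ ha_sum ha_nonneg r hr.1.le hr.2.le)
        (hpow_sum _ _ ha_sum ha_nonneg s hs.1.le hs.2.le)
      intro m
      exact mul_le_mul_of_nonneg_left (pow_le_pow_left₀ hr.1.le hrs.le _) (ha_nonneg m)
    have h3 : (∑' m : ℕ, c (m + N) * r ^ (m + N)) ≤
        ∑' m : ℕ, c (m + N) * s ^ (m + N) := by
      apply Summable.tsum_le_tsum _
        (hpow_sum _ _ hb_sum hb_nonneg r hr.1.le hr.2.le)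
        (hpow_sum _ _ hb_sum hb_nonneg s hs.1.le hs.2.le)
      intro m
      exact mul_le_mul_of_nonneg_left (pow_le_pow_left₀ hr.1.le hrs.le _) (hb_nonneg m)
    linarith
  -- value at 0
  have hK0 : Kstar 0 = -1 - ∑' m : ℕ, (-1 : ℝ) ^ (m + 1) * c (m + 2) := by
    rw [hK 0]
    rw [show ((0:ℝ) ^ n) = 0 from zero_pow (by omega)]
    rw [show (∑' m : ℕ, c (m + 2) * (0:ℝ) ^ (n * (m + 2))) = 0 by
      rw [tsum_congr (fun m => by
        rw [zero_pow (Nat.mul_ne_zero (by omega) (by omega)), mul_zero]), tsum_zero]]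
    rw [show (∑' m : ℕ, c (m + N) * (0:ℝ) ^ (m + N)) = 0 by
      rw [tsum_congr (fun m => by
        rw [zero_pow (by omega), mul_zero]), tsum_zero]]
    ring
  -- lower bound on the alternating sum
  have hC_lb : -(c 2) ≤ ∑' m : ℕ, (-1 : ℝ) ^ (m + 1) * c (m + 2) := by
    rw [Summable.tsum_eq_zero_add hCsum]
    have hT : 0 ≤ ∑' m : ℕ, (-1 : ℝ) ^ (m + 1 + 1) * c (m + 1 + 2) := by
      set f : ℕ → ℝ := fun m => (-1 : ℝ) ^ (m + 1 + 1) * c (m + 1 + 2) with hf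
      have hfsum : Summable f := by
        apply Summable.of_norm_bounded ha_sum
        intro m
        rw [hf]
        simp only
        rw [norm_mul, norm_pow, norm_neg, norm_one, one_pow, one_mul,
          Real.norm_eq_abs, abs_of_nonneg (hcpos _ (by omega)).le]
        exact hcmono (m + 2) (m + 3) (by omega) (by omega)
      have he : Summable (fun k => f (2 * k)) :=
        hfsum.comp_injective (fun a b h => by omega)
      have ho : Summable (fun k => f (2 * k + 1)) :=
        hfsum.comp_injective (fun a b h => by omega)
      rw [← tsum_even_add_odd he ho]
      have he' : (∑' k : ℕ, f (2 * k)) = ∑' k : ℕ, c (2 * k + 3) := by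
        apply tsum_congr
        intro k
        rw [hf]
        simp only
        rw [show 2 * k + 1 + 1 = 2 * (k + 1) by ring, pow_mul]
        norm_num
      have ho' : (∑' k : ℕ, f (2 * k + 1)) = ∑' k : ℕ, -c (2 * k + 4) := by
        apply tsum_congr
        intro k
        rw [hf]
        simp only
        rw [show 2 * k + 1 + 1 + 1 = 2 * (k + 1) + 1 by ring, pow_succ, pow_mul]
        norm_num
      rw [he', ho', tsum_neg]
      have hesum : Summable (fun k : ℕ => c (2 * k + 3)) := by
        apply Summable.of_nonneg_of_le (fun k => (hcpos _ (by omega)).le)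
          (fun k => hcmono (k + 2) (2 * k + 3) (by omega) (by omega)) ha_sum
      have hosum : Summable (fun k : ℕ => c (2 * k + 4)) := by
        apply Summable.of_nonneg_of_le (fun k => (hcpos _ (by omega)).le)
          (fun k => hcmono (k + 2) (2 * k + 4) (by omega) (by omega)) ha_sum
      have hle : (∑' k : ℕ, c (2 * k + 4)) ≤ ∑' k : ℕ, c (2 * k + 3) :=
        Summable.tsum_le_tsum (fun k => hcmono (2 * k + 3) (2 * k + 4) (by omega) (by omega))
          hosum hesum
      linarith
    have h0 : (-1 : ℝ) ^ (0 + 1) * c (0 + 2) = -(c 2) := by norm_num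
    rw [h0]
    linarith
  have hc2lt : c 2 < 1 := by
    rw [hc 2]
    push_cast
    rw [div_lt_one (by nlinarith)]
    nlinarith
  have hKs0 : Kstar 0 < 0 := by rw [hK0]; linarith
  -- value at 1
  have hKs1 : 0 < Kstar 1 := by
    rw [hK 1]
    simp only [one_pow, mul_one]
    have h4 : (∑' m : ℕ, (-1 : ℝ) ^ (m + 1) * c (m + 2)) ≤ ∑' m : ℕ, c (m + 2) := by
      apply Summable.tsum_le_tsum _ hCsum ha_sum
      intro m
      rcases neg_one_pow_eq_or ℝ (m + 1) with h | h <;> rw [h] <;>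
        nlinarith [hcpos (m + 2) (by omega)]
    have h5 : 0 < ∑' m : ℕ, c (m + N) :=
      Summable.tsum_pos hb_sum hb_nonneg 0 (hcpos (0 + N) (by omega))
    linarith
  refine ⟨hcont, hmono, hKs0, hKs1, ?_⟩
  have himage := intermediate_value_Ioo (le_of_lt one_pos) hcont
  have h0mem : (0 : ℝ) ∈ Ioo (Kstar 0) (Kstar 1) := ⟨hKs0, hKs1⟩
  obtain ⟨r, hrmem, hrK⟩ := himage h0mem
  refine ⟨r, ⟨hrmem, hrK⟩, ?_⟩
  rintro s ⟨hsmem, hsK⟩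
  exact hmono.injOn hsmem hrmem (by rw [hsK, hrK])
end

section
/- Let 0 ≤ λ < γ ≤ δ and N ≥ 2 an integer. Define K_N(r) = (r + Σ_{m=2}^∞ c_m r^m)^2 + Σ_{m=N}^∞ c_m r^m − 1 − Σ_{m=2}^∞ (−1)^{m−1} c_m on [0,1], with c_m = 4(γ−λ)/(m^2(2γ+(δ−γ)(m−1))). Then K_N is strictly increasing on (0,1), K_N(0) < 0, K_N(1) > 0, and K_N has a unique root R_N ∈ (0,1). Moreover, for any nonnegative sequences (|a_m|), (|b_m|) with |a_m|+|b_m| ≤ c_m, and for all r ≤ R_N, (r + Σ_{m=2}^∞ (|a_m|+|b_m|) r^m)^2 + Σ_{m=N}^∞ (|a_m|+|b_m|) r^m ≤ 1 + Σ_{m=2}^∞ (−1)^{m−1} c_m. -/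
open Real Set

private lemma aux_sq_summable : Summable (fun n : ℕ => (1:ℝ) / ((n:ℝ)) ^ 2) :=
  Real.summable_one_div_nat_pow.mpr one_lt_two

private lemma aux_D_summable : Summable (fun m : ℕ => 2 / ((m:ℝ) + 2) ^ 2) := by
  have h := (summable_nat_add_iff 2).mpr aux_sq_summable
  have h2 := h.mul_left 2
  refine h2.congr (fun m => ?_)
  push_cast
  ring

private lemma aux_basel : (∑' k : ℕ, (1:ℝ) / ((k:ℝ) + 1) ^ 2) = π ^ 2 / 6 := by
  have h := hasSum_zeta_two
  have hs : Summable (fun n : ℕ => (1:ℝ) / (n:ℝ) ^ 2) := h.summable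
  have h0 : (∑' n : ℕ, (1:ℝ) / (n:ℝ) ^ 2) = π ^ 2 / 6 := h.tsum_eq
  rw [Summable.tsum_eq_zero_add hs] at h0
  simp only [Nat.cast_zero] at h0
  rw [show (1:ℝ) / (0:ℝ) ^ 2 = 0 by norm_num] at h0
  rw [zero_add] at h0
  rw [← h0]
  refine tsum_congr (fun k => ?_)
  push_cast
  ring

theorem KN_unique_root_and_inequality (γ δ lam : ℝ) (hlam : 0 ≤ lam) (hl : lam < γ)
    (hg : γ ≤ δ) (N : ℕ) (hN : 2 ≤ N)
    (c : ℕ → ℝ)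
    (hc : ∀ m : ℕ, c m = 4 * (γ - lam) / ((m : ℝ) ^ 2 * (2 * γ + (δ - γ) * ((m : ℝ) - 1))))
    (KN : ℝ → ℝ)
    (hK : ∀ r : ℝ, KN r =
      (r + ∑' m : ℕ, c (m + 2) * r ^ (m + 2)) ^ 2
        + (∑' m : ℕ, c (m + N) * r ^ (m + N))
        - 1 - ∑' m : ℕ, (-1 : ℝ) ^ (m + 1) * c (m + 2)) :
    StrictMonoOn KN (Ioo 0 1) ∧ KN 0 < 0 ∧ 0 < KN 1 ∧
      (∃! R : ℝ, R ∈ Ioo (0 : ℝ) 1 ∧ KN R = 0) ∧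
      (∀ R : ℝ, R ∈ Ioo (0 : ℝ) 1 → KN R = 0 →
        ∀ a b : ℕ → ℝ, (∀ m, 0 ≤ a m) → (∀ m, 0 ≤ b m) →
          (∀ m : ℕ, 2 ≤ m → a m + b m ≤ c m) →
          ∀ r : ℝ, 0 ≤ r → r ≤ R →
            (r + ∑' m : ℕ, (a (m + 2) + b (m + 2)) * r ^ (m + 2)) ^ 2
                + (∑' m : ℕ, (a (m + N) + b (m + N)) * r ^ (m + N))
              ≤ 1 + ∑' m : ℕ, (-1 : ℝ) ^ (m + 1) * c (m + 2)) := by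
  have hγ : 0 < γ := lt_of_le_of_lt hlam hl
  have hδγ : 0 ≤ δ - γ := by linarith
  -- positivity of c
  have hdenpos : ∀ m : ℕ, 2 ≤ m → 0 < (m : ℝ) ^ 2 * (2 * γ + (δ - γ) * ((m : ℝ) - 1)) := by
    intro m hm
    have hm2 : (2:ℝ) ≤ (m:ℝ) := by exact_mod_cast hm
    have h1 : 0 < (m:ℝ) ^ 2 := by positivity
    have h2 : 0 < 2 * γ + (δ - γ) * ((m : ℝ) - 1) := by nlinarith
    exact mul_pos h1 h2
  have hcpos : ∀ m : ℕ, 2 ≤ m → 0 < c m := by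
    intro m hm
    rw [hc m]
    exact div_pos (by linarith) (hdenpos m hm)
  have hcnn : ∀ m : ℕ, 2 ≤ m → 0 ≤ c m := fun m hm => (hcpos m hm).le
  have hcle : ∀ m : ℕ, 2 ≤ m → c m ≤ 2 / (m : ℝ) ^ 2 := by
    intro m hm
    have hm2 : (2:ℝ) ≤ (m:ℝ) := by exact_mod_cast hm
    have hd := hdenpos m hm
    rw [hc m, div_le_div_iff₀ hd (by positivity)]
    nlinarith [mul_nonneg (mul_nonneg (sq_nonneg (m:ℝ)) hδγ) (show (0:ℝ) ≤ (m:ℝ) - 1 by linarith),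
      mul_nonneg hlam (sq_nonneg (m:ℝ))]
  -- dominating series
  set D : ℕ → ℝ := fun m => 2 / ((m:ℝ) + 2) ^ 2 with hDdef
  have hDsum : Summable D := aux_D_summable
  have key : ∀ f : ℕ → ℝ, (∀ m, |f m| ≤ D m) → Summable f := by
    intro f h
    exact Summable.of_norm_bounded hDsum (by simpa using h)
  have hDge : ∀ (k : ℕ), 2 ≤ k → ∀ m : ℕ, 2 / ((m + k : ℕ) : ℝ) ^ 2 ≤ D m := by
    intro k hk m
    have hk2 : (2:ℝ) ≤ (k:ℝ) := by exact_mod_cast hk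
    have h1 : ((m:ℝ) + 2) ≤ ((m + k : ℕ) : ℝ) := by push_cast; linarith
    have h2 : (0:ℝ) < (m:ℝ) + 2 := by positivity
    have := pow_le_pow_left₀ h2.le h1 2
    exact div_le_div_of_nonneg_left (by norm_num) (by positivity) this
  -- term bound for series with coefficients dominated by c
  have hterm : ∀ (e : ℕ → ℝ), (∀ m, 2 ≤ m → 0 ≤ e m) → (∀ m, 2 ≤ m → e m ≤ c m) →
      ∀ (k : ℕ), 2 ≤ k → ∀ r : ℝ, 0 ≤ r → r ≤ 1 →
      ∀ m : ℕ, 0 ≤ e (m + k) * r ^ (m + k) ∧ e (m + k) * r ^ (m + k) ≤ D m := by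
    intro e he0 hec k hk r hr0 hr1 m
    have hmk : 2 ≤ m + k := hk.trans (Nat.le_add_left k m)
    have h0 : 0 ≤ e (m + k) := he0 _ hmk
    have hrp : 0 ≤ r ^ (m + k) := pow_nonneg hr0 _
    constructor
    · exact mul_nonneg h0 hrp
    · calc e (m + k) * r ^ (m + k) ≤ e (m + k) * 1 := by
            exact mul_le_mul_of_nonneg_left (pow_le_one₀ hr0 hr1) h0
        _ = e (m + k) := mul_one _
        _ ≤ c (m + k) := hec _ hmk
        _ ≤ 2 / ((m + k : ℕ) : ℝ) ^ 2 := hcle _ hmk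
        _ ≤ D m := hDge k hk m
  -- summability of all relevant series
  have hsummable : ∀ (e : ℕ → ℝ), (∀ m, 2 ≤ m → 0 ≤ e m) → (∀ m, 2 ≤ m → e m ≤ c m) →
      ∀ (k : ℕ), 2 ≤ k → ∀ r : ℝ, 0 ≤ r → r ≤ 1 →
      Summable (fun m : ℕ => e (m + k) * r ^ (m + k)) := by
    intro e he0 hec k hk r hr0 hr1
    refine key _ (fun m => ?_)
    obtain ⟨h1, h2⟩ := hterm e he0 hec k hk r hr0 hr1 m
    rwa [abs_of_nonneg h1]
  have hccc : ∀ m, 2 ≤ m → c m ≤ c m := fun m _ => le_refl _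
  -- monotone comparison of sums
  have htsum_le : ∀ (e : ℕ → ℝ), (∀ m, 2 ≤ m → 0 ≤ e m) → (∀ m, 2 ≤ m → e m ≤ c m) →
      ∀ (k : ℕ), 2 ≤ k → ∀ r R : ℝ, 0 ≤ r → r ≤ R → R ≤ 1 →
      (∑' m : ℕ, e (m + k) * r ^ (m + k)) ≤ ∑' m : ℕ, c (m + k) * R ^ (m + k) := by
    intro e he0 hec k hk r R hr0 hrR hR1
    have hR0 : 0 ≤ R := hr0.trans hrR
    refine Summable.tsum_le_tsum (fun m => ?_) (hsummable e he0 hec k hk r hr0 (hrR.trans hR1))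
      (hsummable c hcnn hccc k hk R hR0 hR1)
    have hmk : 2 ≤ m + k := hk.trans (Nat.le_add_left k m)
    exact mul_le_mul (hec _ hmk) (pow_le_pow_left₀ hr0 hrR _) (pow_nonneg hr0 _) (hcnn _ hmk)
  have htsum_nonneg : ∀ (e : ℕ → ℝ), (∀ m, 2 ≤ m → 0 ≤ e m) →
      ∀ (k : ℕ), 2 ≤ k → ∀ r : ℝ, 0 ≤ r →
      (0:ℝ) ≤ ∑' m : ℕ, e (m + k) * r ^ (m + k) := by
    intro e he0 k hk r hr0
    refine tsum_nonneg (fun m => ?_)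
    exact mul_nonneg (he0 _ (hk.trans (Nat.le_add_left k m))) (pow_nonneg hr0 _)
  -- the alternating constant A
  have hAsum : Summable (fun m : ℕ => (-1:ℝ) ^ (m + 1) * c (m + 2)) := by
    refine key _ (fun m => ?_)
    have hm : 2 ≤ m + 2 := Nat.le_add_left 2 m
    rw [abs_mul, abs_pow, abs_neg, abs_one, one_pow, one_mul, abs_of_nonneg (hcnn _ hm)]
    calc c (m + 2) ≤ 2 / ((m + 2 : ℕ) : ℝ) ^ 2 := hcle _ hm
      _ ≤ D m := hDge 2 le_rfl m
  set A : ℝ := ∑' m : ℕ, (-1:ℝ) ^ (m + 1) * c (m + 2) with hAdef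
  -- A > -1 via even/odd splitting
  have hEsum : Summable (fun k : ℕ => c (2 * k + 2)) := by
    refine key _ (fun m => ?_)
    have hm : 2 ≤ 2 * m + 2 := Nat.le_add_left 2 _
    rw [abs_of_nonneg (hcnn _ hm)]
    calc c (2 * m + 2) ≤ 2 / ((2 * m + 2 : ℕ) : ℝ) ^ 2 := hcle _ hm
      _ ≤ D m := by
          have h1 : ((m:ℝ) + 2) ≤ ((2 * m + 2 : ℕ) : ℝ) := by push_cast; linarith [Nat.cast_nonneg (α := ℝ) m]
          have h2 : (0:ℝ) < (m:ℝ) + 2 := by positivity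
          exact div_le_div_of_nonneg_left (by norm_num) (by positivity) (pow_le_pow_left₀ h2.le h1 2)
  have hOsum : Summable (fun k : ℕ => c (2 * k + 3)) := by
    refine key _ (fun m => ?_)
    have hm : 2 ≤ 2 * m + 3 := by omega
    rw [abs_of_nonneg (hcnn _ hm)]
    calc c (2 * m + 3) ≤ 2 / ((2 * m + 3 : ℕ) : ℝ) ^ 2 := hcle _ hm
      _ ≤ D m := by
          have h1 : ((m:ℝ) + 2) ≤ ((2 * m + 3 : ℕ) : ℝ) := by push_cast; linarith [Nat.cast_nonneg (α := ℝ) m]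
          have h2 : (0:ℝ) < (m:ℝ) + 2 := by positivity
          exact div_le_div_of_nonneg_left (by norm_num) (by positivity) (pow_le_pow_left₀ h2.le h1 2)
  have hAeq : A = -(∑' k : ℕ, c (2 * k + 2)) + ∑' k : ℕ, c (2 * k + 3) := by
    have e1 : (fun k : ℕ => (-1:ℝ) ^ (2 * k + 1) * c (2 * k + 2)) = fun k => -(c (2 * k + 2)) := by
      funext k
      rw [pow_succ, pow_mul]
      norm_num
    have e2 : (fun k : ℕ => (-1:ℝ) ^ (2 * k + 1 + 1) * c (2 * k + 1 + 2)) =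
        fun k => c (2 * k + 3) := by
      funext k
      rw [show 2 * k + 1 + 1 = 2 * (k + 1) from by ring, pow_mul]
      norm_num
    have he : HasSum (fun k : ℕ => (-1:ℝ) ^ (2 * k + 1) * c (2 * k + 2))
        (-(∑' k : ℕ, c (2 * k + 2))) := by
      rw [e1]; exact hEsum.hasSum.neg
    have ho : HasSum (fun k : ℕ => (-1:ℝ) ^ (2 * k + 1 + 1) * c (2 * k + 1 + 2))
        (∑' k : ℕ, c (2 * k + 3)) := by
      rw [e2]; exact hOsum.hasSum
    have h := (HasSum.even_add_odd (f := fun m : ℕ => (-1:ℝ) ^ (m + 1) * c (m + 2)) he ho).tsum_eq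
    rw [hAdef]
    linarith [h]
  -- bound the even part by π²/12
  have hhalfsum : Summable (fun k : ℕ => (1/2 : ℝ) * (1 / ((k:ℝ) + 1) ^ 2)) := by
    have h := ((summable_nat_add_iff 1).mpr aux_sq_summable).mul_left (1/2 : ℝ)
    refine h.congr (fun k => ?_)
    push_cast
    ring
  have hhalftsum : (∑' k : ℕ, (1/2 : ℝ) * (1 / ((k:ℝ) + 1) ^ 2)) = π ^ 2 / 12 := by
    rw [tsum_mul_left, aux_basel]
    ring
  have hEle : (∑' k : ℕ, c (2 * k + 2)) ≤ π ^ 2 / 12 := by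
    rw [← hhalftsum]
    refine Summable.tsum_le_tsum (fun k => ?_) hEsum hhalfsum
    have hm : 2 ≤ 2 * k + 2 := Nat.le_add_left 2 _
    calc c (2 * k + 2) ≤ 2 / ((2 * k + 2 : ℕ) : ℝ) ^ 2 := hcle _ hm
      _ = (1/2 : ℝ) * (1 / ((k:ℝ) + 1) ^ 2) := by
          push_cast
          have : ((2:ℝ) * k + 2) ^ 2 = 4 * ((k:ℝ) + 1) ^ 2 := by ring
          rw [this]
          field_simp
          ring
  have hAgt : (-1 : ℝ) < A := by
    have hO0 : (0:ℝ) ≤ ∑' k : ℕ, c (2 * k + 3) :=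
      tsum_nonneg (fun k => hcnn _ (by omega))
    have hpi : π ^ 2 / 12 < 1 := by nlinarith [pi_lt_d2, pi_pos]
    rw [hAeq]
    linarith
  -- A ≤ C
  have hCsum : Summable (fun m : ℕ => c (m + 2)) := by
    refine key _ (fun m => ?_)
    have hm : 2 ≤ m + 2 := Nat.le_add_left 2 m
    rw [abs_of_nonneg (hcnn _ hm)]
    exact (hcle _ hm).trans (hDge 2 le_rfl m)
  set C : ℝ := ∑' m : ℕ, c (m + 2) with hCdef
  have hAleC : A ≤ C := by
    refine Summable.tsum_le_tsum (fun m => ?_) hAsum hCsum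
    have hm : 2 ≤ m + 2 := Nat.le_add_left 2 m
    calc (-1:ℝ) ^ (m + 1) * c (m + 2) ≤ |(-1:ℝ) ^ (m + 1) * c (m + 2)| := le_abs_self _
      _ = c (m + 2) := by
          rw [abs_mul, abs_pow, abs_neg, abs_one, one_pow, one_mul, abs_of_nonneg (hcnn _ hm)]
  have hCpos : (0:ℝ) < C := by
    have h2 : c (0 + 2) ≤ C := Summable.le_tsum hCsum 0 (fun j _ => hcnn _ (Nat.le_add_left 2 j))
    have := hcpos 2 le_rfl
    simpa using lt_of_lt_of_le this h2
  -- strict monotonicity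
  have hmono : StrictMonoOn KN (Ioo (0:ℝ) 1) := by
    intro x hx y hy hxy
    have hx0 : (0:ℝ) ≤ x := hx.1.le
    have hy1 : y ≤ 1 := hy.2.le
    have h1 : (∑' m : ℕ, c (m + 2) * x ^ (m + 2)) ≤ ∑' m : ℕ, c (m + 2) * y ^ (m + 2) :=
      htsum_le c hcnn hccc 2 le_rfl x y hx0 hxy.le hy1
    have h2 : (∑' m : ℕ, c (m + N) * x ^ (m + N)) ≤ ∑' m : ℕ, c (m + N) * y ^ (m + N) :=
      htsum_le c hcnn hccc N hN x y hx0 hxy.le hy1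
    have h0 : (0:ℝ) ≤ x + ∑' m : ℕ, c (m + 2) * x ^ (m + 2) :=
      add_nonneg hx0 (htsum_nonneg c hcnn 2 le_rfl x hx0)
    have hlt : x + (∑' m : ℕ, c (m + 2) * x ^ (m + 2)) <
        y + ∑' m : ℕ, c (m + 2) * y ^ (m + 2) := by linarith
    have hsq := pow_lt_pow_left₀ hlt h0 (two_ne_zero)
    rw [hK x, hK y]
    linarith
  -- KN 0 < 0
  have hK0 : KN 0 < 0 := by
    have hz1 : (∑' m : ℕ, c (m + 2) * (0:ℝ) ^ (m + 2)) = 0 := by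
      have h : ∀ m : ℕ, c (m + 2) * (0:ℝ) ^ (m + 2) = 0 := fun m => by
        rw [zero_pow (by omega), mul_zero]
      simp only [h]
      exact tsum_zero
    have hz2 : (∑' m : ℕ, c (m + N) * (0:ℝ) ^ (m + N)) = 0 := by
      have h : ∀ m : ℕ, c (m + N) * (0:ℝ) ^ (m + N) = 0 := fun m => by
        rw [zero_pow (by omega), mul_zero]
      simp only [h]
      exact tsum_zero
    rw [hK 0, hz1, hz2]
    nlinarith
  -- KN 1 > 0
  have hK1 : 0 < KN 1 := by
    have e1 : (∑' m : ℕ, c (m + 2) * (1:ℝ) ^ (m + 2)) = C := by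
      rw [hCdef]
      exact tsum_congr (fun m => by rw [one_pow, mul_one])
    have e2 : (0:ℝ) ≤ ∑' m : ℕ, c (m + N) * (1:ℝ) ^ (m + N) :=
      htsum_nonneg c hcnn N hN 1 zero_le_one
    rw [hK 1, e1]
    nlinarith
  -- continuity on [0,1]
  have hcont : ContinuousOn KN (Icc (0:ℝ) 1) := by
    have hKfun : KN = fun r => (r + ∑' m : ℕ, c (m + 2) * r ^ (m + 2)) ^ 2
        + (∑' m : ℕ, c (m + N) * r ^ (m + N)) - 1
        - ∑' m : ℕ, (-1:ℝ) ^ (m + 1) * c (m + 2) := funext hK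
    have hg : ∀ k : ℕ, 2 ≤ k →
        ContinuousOn (fun r : ℝ => ∑' m : ℕ, c (m + k) * r ^ (m + k)) (Icc 0 1) := by
      intro k hk
      refine continuousOn_tsum (f := fun m (r : ℝ) => c (m + k) * r ^ (m + k))
        (fun i => (continuous_const.mul (continuous_pow _)).continuousOn) hDsum ?_
      intro n x hx
      obtain ⟨h1, h2⟩ := hterm c hcnn hccc k hk x hx.1 hx.2 n
      rw [Real.norm_eq_abs, abs_of_nonneg h1]
      exact h2
    rw [hKfun]
    exact ((((continuousOn_id.add (hg 2 le_rfl)).pow 2).add (hg N hN)).sub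
      continuousOn_const).sub continuousOn_const
  -- existence of a root
  have hex : ∃ R ∈ Ioo (0:ℝ) 1, KN R = 0 := by
    have h0mem : (0:ℝ) ∈ Ioo (KN 0) (KN 1) := ⟨hK0, hK1⟩
    obtain ⟨R, hR, hR0⟩ := intermediate_value_Ioo zero_le_one hcont h0mem
    exact ⟨R, hR, hR0⟩
  obtain ⟨R₀, hR₀mem, hR₀⟩ := hex
  refine ⟨hmono, hK0, hK1, ⟨R₀, ⟨hR₀mem, hR₀⟩, ?_⟩, ?_⟩
  · rintro R' ⟨hR'mem, hR'⟩
    exact hmono.injOn hR'mem hR₀mem (by rw [hR', hR₀])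
  -- the final inequality
  · intro R hR hKR a b ha hb hab r hr0 hrR
    have hR1 : R ≤ 1 := hR.2.le
    have hR0 : (0:ℝ) ≤ R := hR.1.le
    have he0 : ∀ m, 2 ≤ m → 0 ≤ a m + b m := fun m _ => add_nonneg (ha m) (hb m)
    have h1 : (∑' m : ℕ, (a (m + 2) + b (m + 2)) * r ^ (m + 2)) ≤
        ∑' m : ℕ, c (m + 2) * R ^ (m + 2) :=
      htsum_le _ he0 hab 2 le_rfl r R hr0 hrR hR1
    have h2 : (∑' m : ℕ, (a (m + N) + b (m + N)) * r ^ (m + N)) ≤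
        ∑' m : ℕ, c (m + N) * R ^ (m + N) :=
      htsum_le _ he0 hab N hN r R hr0 hrR hR1
    have h0 : (0:ℝ) ≤ r + ∑' m : ℕ, (a (m + 2) + b (m + 2)) * r ^ (m + 2) :=
      add_nonneg hr0 (htsum_nonneg _ he0 2 le_rfl r hr0)
    have hsum1 : r + (∑' m : ℕ, (a (m + 2) + b (m + 2)) * r ^ (m + 2)) ≤
        R + ∑' m : ℕ, c (m + 2) * R ^ (m + 2) := by linarith
    have hsq := pow_le_pow_left₀ h0 hsum1 2
    have hKReq := hK R
    rw [hKR] at hKReq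
    linarith
end

section
/- Let 0 ≤ λ < γ ≤ δ and define, for t a nonnegative integer and μ, β > 0, the function ψ(r) = (r + Σ_{m=2}^∞ c_m r^m)^n + Σ_{m=N}^∞ c_m r^m + μ·sgn(t)·(Σ_{m=1}^{t} c_m²)·r^N/(1−r) + β·(1/(1−r))·Σ_{m=t+1}^∞ c_m² r^{2m} − 1 − Σ_{m=2}^∞ (−1)^{m−1} c_m on [0,1) (with c₁ interpreted as 1 and c_m = 4(γ−λ)/(m^2(2γ+(δ−γ)(m−1))) for m ≥ 2, n ≥ 1, N ≥ 5, t = ⌊(N−1)/2⌋). Then ψ is strictly increasing on (0,1), ψ(0) < 0, ψ(r) → +∞ as r → 1⁻, and ψ has a unique root in (0,1). -/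
open Real Set Filter

set_option maxHeartbeats 1000000 in
theorem refined_bohr_psi_unique_root (γ δ lam μ β : ℝ) (hlam : 0 ≤ lam) (hl : lam < γ)
    (hg : γ ≤ δ) (hμ : 0 < μ) (hβ : 0 < β)
    (n N t : ℕ) (hn : 1 ≤ n) (hN : 5 ≤ N) (ht : t = (N - 1) / 2)
    (c : ℕ → ℝ) (hc1 : c 1 = 1)
    (hc : ∀ m : ℕ, 2 ≤ m →
      c m = 4 * (γ - lam) / ((m : ℝ) ^ 2 * (2 * γ + (δ - γ) * ((m : ℝ) - 1))))
    (ψ : ℝ → ℝ)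
    (hψ : ∀ r : ℝ, r < 1 → ψ r =
      (r + ∑' m : ℕ, c (m + 2) * r ^ (m + 2)) ^ n
        + (∑' m : ℕ, c (m + N) * r ^ (m + N))
        + μ * (if t = 0 then (0 : ℝ) else 1) * (∑ m ∈ Finset.Icc 1 t, (c m) ^ 2) *
            (r ^ N / (1 - r))
        + β * (1 / (1 - r)) * (∑' m : ℕ, (c (m + t + 1)) ^ 2 * r ^ (2 * (m + t + 1)))
        - 1 - ∑' m : ℕ, (-1 : ℝ) ^ (m + 1) * c (m + 2)) :
    StrictMonoOn ψ (Ioo 0 1) ∧ ψ 0 < 0 ∧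
      Tendsto ψ (nhdsWithin 1 (Iio 1)) atTop ∧
      (∃! r : ℝ, r ∈ Ioo (0 : ℝ) 1 ∧ ψ r = 0) := by
  have hγ : 0 < γ := lt_of_le_of_lt hlam hl
  -- positivity and bounds on c
  have hcnn : ∀ m : ℕ, 1 ≤ m → 0 < c m := by
    intro m hm
    rcases eq_or_lt_of_le hm with h | h
    · rw [← h, hc1]; norm_num
    · have hm2 : 2 ≤ m := h
      have h2 : (2:ℝ) ≤ (m:ℝ) := by exact_mod_cast hm2
      have hin : 0 < 2 * γ + (δ - γ) * ((m:ℝ) - 1) := by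
        have := mul_nonneg (sub_nonneg.mpr hg) (by linarith : (0:ℝ) ≤ (m:ℝ) - 1)
        linarith
      rw [hc m hm2]
      exact div_pos (by linarith) (mul_pos (by positivity) hin)
  have hc0 : ∀ m : ℕ, 1 ≤ m → 0 ≤ c m := fun m hm => (hcnn m hm).le
  have hcle1 : ∀ m : ℕ, 1 ≤ m → c m ≤ 1 := by
    intro m hm
    rcases eq_or_lt_of_le hm with h | h
    · rw [← h, hc1]
    · have hm2 : 2 ≤ m := h
      have h2 : (2:ℝ) ≤ (m:ℝ) := by exact_mod_cast hm2
      have hδγ : (0:ℝ) ≤ (δ - γ) * ((m:ℝ) - 1) :=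
        mul_nonneg (sub_nonneg.mpr hg) (by linarith)
      have hin : 0 < 2 * γ + (δ - γ) * ((m:ℝ) - 1) := by linarith
      have h4 : (4:ℝ) ≤ (m:ℝ)^2 := by nlinarith
      have hbig : 4 * (2 * γ) ≤ (m:ℝ)^2 * (2 * γ + (δ - γ) * ((m:ℝ) - 1)) := by
        calc 4 * (2 * γ) ≤ (m:ℝ)^2 * (2 * γ) := by nlinarith
          _ ≤ (m:ℝ)^2 * (2 * γ + (δ - γ) * ((m:ℝ) - 1)) := by nlinarith
      rw [hc m hm2, div_le_one (mul_pos (by positivity) hin)]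
      linarith
  have hcle2 : ∀ m : ℕ, 2 ≤ m → c m ≤ 2 / (m:ℝ)^2 := by
    intro m hm2
    have h2 : (2:ℝ) ≤ (m:ℝ) := by exact_mod_cast hm2
    have hδγ : (0:ℝ) ≤ (δ - γ) * ((m:ℝ) - 1) :=
      mul_nonneg (sub_nonneg.mpr hg) (by linarith)
    have hin : 0 < 2 * γ + (δ - γ) * ((m:ℝ) - 1) := by linarith
    rw [hc m hm2, div_le_div_iff₀ (mul_pos (by positivity) hin) (by positivity)]
    nlinarith [mul_nonneg (sq_nonneg (m:ℝ)) hδγ, mul_nonneg (sq_nonneg (m:ℝ)) hlam,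
      sq_nonneg (m:ℝ)]
  -- summability of the basic series
  have hsumc : Summable (fun m : ℕ => c (m + 2)) := by
    have h1 : Summable (fun n : ℕ => (1:ℝ) / (n:ℝ)^2) := hasSum_zeta_two.summable
    have h2 : Summable (fun m : ℕ => (1:ℝ) / ((m + 2 : ℕ):ℝ)^2) :=
      h1.comp_injective (fun a b h => by beta_reduce at h; omega)
    have h3 : Summable (fun m : ℕ => 2 * ((1:ℝ) / ((m + 2 : ℕ):ℝ)^2)) := h2.mul_left 2
    apply Summable.of_nonneg_of_le (fun m => hc0 _ (by omega)) _ h3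
    intro m
    have := hcle2 (m + 2) (by omega)
    calc c (m + 2) ≤ 2 / ((m + 2 : ℕ):ℝ)^2 := by exact_mod_cast this
      _ = 2 * ((1:ℝ) / ((m + 2 : ℕ):ℝ)^2) := by ring
  have hsumgeo : ∀ {r : ℝ}, 0 ≤ r → r < 1 → Summable (fun m : ℕ => r ^ m) :=
    fun h0 h1 => summable_geometric_of_lt_one h0 h1
  -- summability of the four series at any r ∈ [0,1)
  have hS1 : ∀ r : ℝ, 0 ≤ r → r < 1 → Summable (fun m : ℕ => c (m + 2) * r ^ (m + 2)) := by
    intro r h0 h1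
    apply Summable.of_nonneg_of_le _ _ (hsumgeo h0 h1)
    · intro m; exact mul_nonneg (hc0 _ (by omega)) (pow_nonneg h0 _)
    · intro m
      calc c (m + 2) * r ^ (m + 2) ≤ 1 * r ^ (m + 2) :=
            mul_le_mul_of_nonneg_right (hcle1 _ (by omega)) (pow_nonneg h0 _)
        _ = r ^ (m + 2) := one_mul _
        _ ≤ r ^ m := pow_le_pow_of_le_one h0 h1.le (by omega)
  have hS2 : ∀ r : ℝ, 0 ≤ r → r < 1 → Summable (fun m : ℕ => c (m + N) * r ^ (m + N)) := by
    intro r h0 h1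
    apply Summable.of_nonneg_of_le _ _ (hsumgeo h0 h1)
    · intro m; exact mul_nonneg (hc0 _ (by omega)) (pow_nonneg h0 _)
    · intro m
      calc c (m + N) * r ^ (m + N) ≤ 1 * r ^ (m + N) :=
            mul_le_mul_of_nonneg_right (hcle1 _ (by omega)) (pow_nonneg h0 _)
        _ = r ^ (m + N) := one_mul _
        _ ≤ r ^ m := pow_le_pow_of_le_one h0 h1.le (by omega)
  have hS4 : ∀ r : ℝ, 0 ≤ r → r < 1 →
      Summable (fun m : ℕ => (c (m + t + 1)) ^ 2 * r ^ (2 * (m + t + 1))) := by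
    intro r h0 h1
    apply Summable.of_nonneg_of_le _ _ (hsumgeo h0 h1)
    · intro m; positivity
    · intro m
      have hcsq : (c (m + t + 1)) ^ 2 ≤ 1 := by
        have ha := hc0 (m + t + 1) (by omega)
        have hb := hcle1 (m + t + 1) (by omega)
        nlinarith
      calc (c (m + t + 1)) ^ 2 * r ^ (2 * (m + t + 1)) ≤ 1 * r ^ (2 * (m + t + 1)) :=
            mul_le_mul_of_nonneg_right hcsq (pow_nonneg h0 _)
        _ = r ^ (2 * (m + t + 1)) := one_mul _
        _ ≤ r ^ m := pow_le_pow_of_le_one h0 h1.le (by omega)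
  have hS5 : Summable (fun m : ℕ => (-1 : ℝ) ^ (m + 1) * c (m + 2)) := by
    apply Summable.of_norm
    have : (fun m : ℕ => ‖(-1 : ℝ) ^ (m + 1) * c (m + 2)‖) = fun m : ℕ => c (m + 2) := by
      funext m
      rw [norm_mul, norm_pow, norm_neg, norm_one, one_pow, one_mul,
        Real.norm_of_nonneg (hc0 _ (by omega))]
    rw [this]; exact hsumc
  -- the value B = ∑ (-1)^m c (m+2) is < 1
  have heven : Summable (fun k : ℕ => c (2 * k + 2)) :=
    hsumc.comp_injective (i := fun k => 2 * k) (fun a b h => by beta_reduce at h; omega)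
  have hodd : Summable (fun k : ℕ => c (2 * k + 3)) :=
    hsumc.comp_injective (i := fun k => 2 * k + 1) (fun a b h => by beta_reduce at h; omega)
  have hBlt : (∑' m : ℕ, (-1 : ℝ) ^ m * c (m + 2)) < 1 := by
    have hfe : ∀ k : ℕ, (-1 : ℝ) ^ (2 * k) * c (2 * k + 2) = c (2 * k + 2) := by
      intro k; rw [pow_mul]; norm_num
    have hfo : ∀ k : ℕ, (-1 : ℝ) ^ (2 * k + 1) * c (2 * k + 1 + 2) = -c (2 * k + 3) := by
      intro k; rw [pow_succ, pow_mul]; norm_num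
    have hse : Summable (fun k : ℕ => (-1 : ℝ) ^ (2 * k) * c (2 * k + 2)) := by
      apply heven.congr; intro k; exact (hfe k).symm
    have hso : Summable (fun k : ℕ => (-1 : ℝ) ^ (2 * k + 1) * c (2 * k + 1 + 2)) := by
      apply (hodd.neg).congr; intro k; exact (hfo k).symm
    have hsplit := tsum_even_add_odd (f := fun m : ℕ => (-1 : ℝ) ^ m * c (m + 2)) hse hso
    rw [tsum_congr hfe, tsum_congr hfo, tsum_neg] at hsplit
    -- even sum bound
    have hg : Summable (fun k : ℕ => (1 / 2 : ℝ) * (1 / ((k + 1 : ℕ):ℝ)^2)) := by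
      have h1 : Summable (fun n : ℕ => (1:ℝ) / (n:ℝ)^2) := hasSum_zeta_two.summable
      exact (h1.comp_injective (i := fun k => k + 1) (fun a b h => by beta_reduce at h; omega)).mul_left _
    have hevenle : (∑' k : ℕ, c (2 * k + 2)) ≤ ∑' k : ℕ, (1 / 2 : ℝ) * (1 / ((k + 1 : ℕ):ℝ)^2) := by
      apply Summable.tsum_le_tsum _ heven hg
      intro k
      have h1 := hcle2 (2 * k + 2) (by omega)
      have h2 : ((2 * k + 2 : ℕ):ℝ) = 2 * ((k + 1 : ℕ):ℝ) := by push_cast; ring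
      calc c (2 * k + 2) ≤ 2 / ((2 * k + 2 : ℕ):ℝ)^2 := h1
        _ = (1 / 2 : ℝ) * (1 / ((k + 1 : ℕ):ℝ)^2) := by
            rw [h2]
            have : ((k + 1 : ℕ):ℝ) ≠ 0 := by positivity
            field_simp
    have hgval : (∑' k : ℕ, (1 / 2 : ℝ) * (1 / ((k + 1 : ℕ):ℝ)^2)) = (1/2) * (π ^ 2 / 6) := by
      have h1 : HasSum (fun k : ℕ => (1:ℝ) / ((k + 1 : ℕ):ℝ)^2) (π ^ 2 / 6) := by
        rw [hasSum_nat_add_iff (g := π ^ 2 / 6) (f := fun n : ℕ => (1:ℝ) / (n:ℝ)^2) 1]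
        simpa using hasSum_zeta_two
      exact (h1.mul_left (1/2)).tsum_eq
    have hoddpos : (0:ℝ) ≤ ∑' k : ℕ, c (2 * k + 3) :=
      tsum_nonneg (fun k => hc0 _ (by omega))
    have hpi : (1/2:ℝ) * (π ^ 2 / 6) < 1 := by
      nlinarith [pi_lt_d2, pi_pos]
    linarith [hsplit.symm]
  -- ψ 0 < 0
  have hψ0 : ψ 0 < 0 := by
    rw [hψ 0 one_pos]
    have e1 : (∑' m : ℕ, c (m + 2) * (0:ℝ) ^ (m + 2)) = 0 := by
      rw [tsum_congr (fun m => by rw [zero_pow (by omega), mul_zero]), tsum_zero]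
    have e2 : (∑' m : ℕ, c (m + N) * (0:ℝ) ^ (m + N)) = 0 := by
      rw [tsum_congr (fun m => by rw [zero_pow (by omega), mul_zero]), tsum_zero]
    have e4 : (∑' m : ℕ, (c (m + t + 1)) ^ 2 * (0:ℝ) ^ (2 * (m + t + 1))) = 0 := by
      rw [tsum_congr (fun m => by rw [zero_pow (by omega), mul_zero]), tsum_zero]
    have eA : (∑' m : ℕ, (-1 : ℝ) ^ (m + 1) * c (m + 2))
        = -(∑' m : ℕ, (-1 : ℝ) ^ m * c (m + 2)) := by
      rw [← tsum_neg]
      apply tsum_congr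
      intro m
      rw [pow_succ]
      ring
    rw [e1, e2, e4, eA]
    rw [zero_pow (show N ≠ 0 by omega)]
    have hz : ((0:ℝ) + 0) ^ n = 0 := by rw [add_zero]; exact zero_pow (by omega)
    rw [hz]
    norm_num
    linarith [hBlt]
  have htne : t ≠ 0 := by omega
  have hCsum : (1:ℝ) ≤ ∑ m ∈ Finset.Icc 1 t, (c m) ^ 2 := by
    have h1t : (1:ℕ) ∈ Finset.Icc 1 t := Finset.mem_Icc.mpr ⟨le_refl 1, by omega⟩
    have h2 := Finset.single_le_sum (f := fun m => (c m)^2) (fun i _ => sq_nonneg _) h1t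
    simpa [hc1] using h2
  have hCpos : (0:ℝ) < ∑ m ∈ Finset.Icc 1 t, (c m) ^ 2 := lt_of_lt_of_le one_pos hCsum
  -- strict monotonicity
  have hmono : StrictMonoOn ψ (Ioo 0 1) := by
    intro a ha b hb hab
    obtain ⟨ha0, ha1⟩ := ha
    obtain ⟨hb0, hb1⟩ := hb
    rw [hψ a ha1, hψ b hb1, if_neg htne]
    have h1a : 0 < 1 - a := by linarith
    have h1b : 0 < 1 - b := by linarith
    have hT1 : (a + ∑' m : ℕ, c (m + 2) * a ^ (m + 2)) ^ n
        ≤ (b + ∑' m : ℕ, c (m + 2) * b ^ (m + 2)) ^ n := by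
      apply pow_le_pow_left₀
      · exact add_nonneg ha0.le (tsum_nonneg fun m =>
          mul_nonneg (hc0 _ (by omega)) (pow_nonneg ha0.le _))
      · apply add_le_add hab.le
        apply Summable.tsum_le_tsum _ (hS1 a ha0.le ha1) (hS1 b hb0.le hb1)
        intro m
        exact mul_le_mul_of_nonneg_left (pow_le_pow_left₀ ha0.le hab.le _) (hc0 _ (by omega))
    have hT2 : (∑' m : ℕ, c (m + N) * a ^ (m + N)) ≤ ∑' m : ℕ, c (m + N) * b ^ (m + N) := by
      apply Summable.tsum_le_tsum _ (hS2 a ha0.le ha1) (hS2 b hb0.le hb1)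
      intro m
      exact mul_le_mul_of_nonneg_left (pow_le_pow_left₀ ha0.le hab.le _) (hc0 _ (by omega))
    have hfrac : a ^ N / (1 - a) < b ^ N / (1 - b) := by
      rw [div_eq_mul_inv, div_eq_mul_inv]
      have h1 : a ^ N < b ^ N := pow_lt_pow_left₀ hab ha0.le (by omega)
      calc a ^ N * (1 - a)⁻¹ < b ^ N * (1 - a)⁻¹ :=
            mul_lt_mul_of_pos_right h1 (inv_pos.mpr h1a)
        _ ≤ b ^ N * (1 - b)⁻¹ := by
            apply mul_le_mul_of_nonneg_left (inv_anti₀ h1b (by linarith))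
              (pow_nonneg hb0.le N)
    have hT3 : μ * 1 * (∑ m ∈ Finset.Icc 1 t, (c m)^2) * (a ^ N / (1 - a))
        < μ * 1 * (∑ m ∈ Finset.Icc 1 t, (c m)^2) * (b ^ N / (1 - b)) := by
      apply mul_lt_mul_of_pos_left hfrac
      have : 0 < μ * 1 := by linarith
      exact mul_pos this hCpos
    have hT4 : β * (1 / (1 - a)) * (∑' m : ℕ, (c (m + t + 1)) ^ 2 * a ^ (2 * (m + t + 1)))
        ≤ β * (1 / (1 - b)) * (∑' m : ℕ, (c (m + t + 1)) ^ 2 * b ^ (2 * (m + t + 1))) := by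
      have hinv : 1 / (1 - a) ≤ 1 / (1 - b) := one_div_le_one_div_of_le h1b (by linarith)
      have hS : (∑' m : ℕ, (c (m + t + 1)) ^ 2 * a ^ (2 * (m + t + 1)))
          ≤ ∑' m : ℕ, (c (m + t + 1)) ^ 2 * b ^ (2 * (m + t + 1)) := by
        apply Summable.tsum_le_tsum _ (hS4 a ha0.le ha1) (hS4 b hb0.le hb1)
        intro m
        exact mul_le_mul_of_nonneg_left (pow_le_pow_left₀ ha0.le hab.le _) (sq_nonneg _)
      have hSa0 : 0 ≤ ∑' m : ℕ, (c (m + t + 1)) ^ 2 * a ^ (2 * (m + t + 1)) :=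
        tsum_nonneg fun m => mul_nonneg (sq_nonneg _) (pow_nonneg ha0.le _)
      calc β * (1 / (1 - a)) * (∑' m : ℕ, (c (m + t + 1)) ^ 2 * a ^ (2 * (m + t + 1)))
          ≤ β * (1 / (1 - b)) * (∑' m : ℕ, (c (m + t + 1)) ^ 2 * a ^ (2 * (m + t + 1))) :=
            mul_le_mul_of_nonneg_right (mul_le_mul_of_nonneg_left hinv hβ.le) hSa0
        _ ≤ β * (1 / (1 - b)) * (∑' m : ℕ, (c (m + t + 1)) ^ 2 * b ^ (2 * (m + t + 1))) := by
            apply mul_le_mul_of_nonneg_left hS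
            exact mul_nonneg hβ.le (div_nonneg zero_le_one h1b.le)
    linarith
  -- tendsto atTop
  have htend : Tendsto ψ (nhdsWithin 1 (Iio 1)) atTop := by
    have key : ∀ r ∈ Ioo (1/2 : ℝ) 1,
        (μ * (∑ m ∈ Finset.Icc 1 t, (c m)^2) * (1/2 : ℝ) ^ N) * (1 - r)⁻¹
          + (- 1 - ∑' m : ℕ, (-1 : ℝ) ^ (m + 1) * c (m + 2)) ≤ ψ r := by
      intro r hr
      obtain ⟨hr2, hr1⟩ := hr
      have hr0 : (0:ℝ) ≤ r := by linarith
      have h1r : 0 < 1 - r := by linarith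
      rw [hψ r hr1, if_neg htne]
      have hT1 : 0 ≤ (r + ∑' m : ℕ, c (m + 2) * r ^ (m + 2)) ^ n :=
        pow_nonneg (add_nonneg hr0 (tsum_nonneg fun m =>
          mul_nonneg (hc0 _ (by omega)) (pow_nonneg hr0 _))) n
      have hT2 : 0 ≤ ∑' m : ℕ, c (m + N) * r ^ (m + N) :=
        tsum_nonneg fun m => mul_nonneg (hc0 _ (by omega)) (pow_nonneg hr0 _)
      have hT4 : 0 ≤ β * (1 / (1 - r)) * ∑' m : ℕ, (c (m + t + 1)) ^ 2 * r ^ (2 * (m + t + 1)) :=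
        mul_nonneg (mul_nonneg hβ.le (div_nonneg zero_le_one h1r.le))
          (tsum_nonneg fun m => mul_nonneg (sq_nonneg _) (pow_nonneg hr0 _))
      have hT3 : (μ * (∑ m ∈ Finset.Icc 1 t, (c m)^2) * (1/2 : ℝ) ^ N) * (1 - r)⁻¹
          ≤ μ * 1 * (∑ m ∈ Finset.Icc 1 t, (c m)^2) * (r ^ N / (1 - r)) := by
        rw [div_eq_mul_inv]
        have hp : ((1:ℝ)/2) ^ N ≤ r ^ N := pow_le_pow_left₀ (by norm_num) hr2.le N
        have hle : ((1:ℝ)/2) ^ N * (1 - r)⁻¹ ≤ r ^ N * (1 - r)⁻¹ :=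
          mul_le_mul_of_nonneg_right hp (inv_nonneg.mpr h1r.le)
        calc (μ * (∑ m ∈ Finset.Icc 1 t, (c m)^2) * (1/2 : ℝ) ^ N) * (1 - r)⁻¹
            = μ * (∑ m ∈ Finset.Icc 1 t, (c m)^2) * ((1/2 : ℝ) ^ N * (1 - r)⁻¹) := by ring
          _ ≤ μ * (∑ m ∈ Finset.Icc 1 t, (c m)^2) * (r ^ N * (1 - r)⁻¹) :=
              mul_le_mul_of_nonneg_left hle (mul_nonneg hμ.le hCpos.le)
          _ = μ * 1 * (∑ m ∈ Finset.Icc 1 t, (c m)^2) * (r ^ N * (1 - r)⁻¹) := by ring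
      linarith
    have hbase : Tendsto (fun r : ℝ => (1 - r)⁻¹) (nhdsWithin 1 (Iio 1)) atTop := by
      apply tendsto_inv_nhdsGT_zero.comp
      rw [tendsto_nhdsWithin_iff]
      constructor
      · have h : Tendsto (fun r : ℝ => 1 - r) (nhds 1) (nhds 0) := by
          have h0 := (continuous_sub_left (1:ℝ)).tendsto 1
          simpa using h0
        exact h.mono_left nhdsWithin_le_nhds
      · exact eventually_nhdsWithin_of_forall fun r hr => by
          simp only [mem_Iio] at hr
          simp only [mem_Ioi]
          linarith
    have hK : 0 < μ * (∑ m ∈ Finset.Icc 1 t, (c m)^2) * (1/2 : ℝ) ^ N := by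
      apply mul_pos (mul_pos hμ hCpos)
      positivity
    have h3 := tendsto_atTop_add_const_right (nhdsWithin (1:ℝ) (Iio 1))
      (- 1 - ∑' m : ℕ, (-1 : ℝ) ^ (m + 1) * c (m + 2)) (hbase.const_mul_atTop hK)
    apply tendsto_atTop_mono' _ _ h3
    exact eventually_of_mem (Ioo_mem_nhdsLT_of_mem (by norm_num : (1:ℝ) ∈ Ioc (1/2 : ℝ) 1)) key
  refine ⟨hmono, hψ0, htend, ?_⟩
  -- existence and uniqueness of the root
  have hev : ∀ᶠ r in nhdsWithin (1:ℝ) (Iio 1), 0 < ψ r ∧ r ∈ Ioo (1/2 : ℝ) 1 :=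
    (htend.eventually_gt_atTop 0).and (eventually_of_mem
      (Ioo_mem_nhdsLT_of_mem (by norm_num : (1:ℝ) ∈ Ioc (1/2 : ℝ) 1)) fun x hx => hx)
  obtain ⟨r₀, hψr₀, hr₀⟩ := hev.exists
  have hr₀0 : (0:ℝ) ≤ r₀ := by linarith [hr₀.1]
  have hr₀1 : r₀ < 1 := hr₀.2
  have hgeo₀ : Summable (fun m : ℕ => r₀ ^ m) := hsumgeo hr₀0 hr₀1
  have hbnd : ∀ (k : ℕ) (x : ℝ), x ∈ Icc (0:ℝ) r₀ → 0 ≤ x ∧ x ≤ r₀ ∧ x < 1 :=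
    fun k x hx => ⟨hx.1, hx.2, lt_of_le_of_lt hx.2 hr₀1⟩
  have hcont : ContinuousOn ψ (Icc 0 r₀) := by
    have hc1' : ContinuousOn (fun r : ℝ => ∑' m : ℕ, c (m + 2) * r ^ (m + 2)) (Icc 0 r₀) := by
      apply continuousOn_tsum (u := fun m => r₀ ^ m)
        (fun m => (continuous_const.mul (continuous_pow _)).continuousOn) hgeo₀
      intro m x hx
      obtain ⟨hx0, hxr, hx1⟩ := hbnd m x hx
      show ‖c (m + 2) * x ^ (m + 2)‖ ≤ r₀ ^ m
      rw [Real.norm_eq_abs, abs_of_nonneg (mul_nonneg (hc0 _ (by omega)) (pow_nonneg hx0 _))]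
      calc c (m + 2) * x ^ (m + 2) ≤ 1 * x ^ (m + 2) :=
            mul_le_mul_of_nonneg_right (hcle1 _ (by omega)) (pow_nonneg hx0 _)
        _ = x ^ (m + 2) := one_mul _
        _ ≤ x ^ m := pow_le_pow_of_le_one hx0 hx1.le (by omega)
        _ ≤ r₀ ^ m := pow_le_pow_left₀ hx0 hxr m
    have hc2' : ContinuousOn (fun r : ℝ => ∑' m : ℕ, c (m + N) * r ^ (m + N)) (Icc 0 r₀) := by
      apply continuousOn_tsum (u := fun m => r₀ ^ m)
        (fun m => (continuous_const.mul (continuous_pow _)).continuousOn) hgeo₀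
      intro m x hx
      obtain ⟨hx0, hxr, hx1⟩ := hbnd m x hx
      show ‖c (m + N) * x ^ (m + N)‖ ≤ r₀ ^ m
      rw [Real.norm_eq_abs, abs_of_nonneg (mul_nonneg (hc0 _ (by omega)) (pow_nonneg hx0 _))]
      calc c (m + N) * x ^ (m + N) ≤ 1 * x ^ (m + N) :=
            mul_le_mul_of_nonneg_right (hcle1 _ (by omega)) (pow_nonneg hx0 _)
        _ = x ^ (m + N) := one_mul _
        _ ≤ x ^ m := pow_le_pow_of_le_one hx0 hx1.le (by omega)
        _ ≤ r₀ ^ m := pow_le_pow_left₀ hx0 hxr m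
    have hc4' : ContinuousOn
        (fun r : ℝ => ∑' m : ℕ, (c (m + t + 1)) ^ 2 * r ^ (2 * (m + t + 1))) (Icc 0 r₀) := by
      apply continuousOn_tsum (u := fun m => r₀ ^ m)
        (fun m => (continuous_const.mul (continuous_pow _)).continuousOn) hgeo₀
      intro m x hx
      obtain ⟨hx0, hxr, hx1⟩ := hbnd m x hx
      show ‖(c (m + t + 1)) ^ 2 * x ^ (2 * (m + t + 1))‖ ≤ r₀ ^ m
      rw [Real.norm_eq_abs, abs_of_nonneg (mul_nonneg (sq_nonneg _) (pow_nonneg hx0 _))]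
      have hcsq : (c (m + t + 1)) ^ 2 ≤ 1 := by
        have ha := hc0 (m + t + 1) (by omega)
        have hb := hcle1 (m + t + 1) (by omega)
        nlinarith
      calc (c (m + t + 1)) ^ 2 * x ^ (2 * (m + t + 1)) ≤ 1 * x ^ (2 * (m + t + 1)) :=
            mul_le_mul_of_nonneg_right hcsq (pow_nonneg hx0 _)
        _ = x ^ (2 * (m + t + 1)) := one_mul _
        _ ≤ x ^ m := pow_le_pow_of_le_one hx0 hx1.le (by omega)
        _ ≤ r₀ ^ m := pow_le_pow_left₀ hx0 hxr m
    have hne : ∀ x ∈ Icc (0:ℝ) r₀, 1 - x ≠ 0 := by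
      intro x hx
      have := lt_of_le_of_lt hx.2 hr₀1
      intro h; linarith [sub_eq_zero.mp h]
    have hdiv1 : ContinuousOn (fun r : ℝ => r ^ N / (1 - r)) (Icc 0 r₀) :=
      (continuous_pow N).continuousOn.div
        (continuous_const.sub continuous_id).continuousOn hne
    have hdiv2 : ContinuousOn (fun r : ℝ => 1 / (1 - r)) (Icc 0 r₀) :=
      continuous_const.continuousOn.div
        (continuous_const.sub continuous_id).continuousOn hne
    have hF : ContinuousOn (fun r : ℝ =>
        (r + ∑' m : ℕ, c (m + 2) * r ^ (m + 2)) ^ n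
        + (∑' m : ℕ, c (m + N) * r ^ (m + N))
        + μ * (if t = 0 then (0 : ℝ) else 1) * (∑ m ∈ Finset.Icc 1 t, (c m) ^ 2) *
            (r ^ N / (1 - r))
        + β * (1 / (1 - r)) * (∑' m : ℕ, (c (m + t + 1)) ^ 2 * r ^ (2 * (m + t + 1)))
        - 1 - ∑' m : ℕ, (-1 : ℝ) ^ (m + 1) * c (m + 2)) (Icc 0 r₀) := by
      apply ContinuousOn.sub
      apply ContinuousOn.sub
      apply ContinuousOn.add
      apply ContinuousOn.add
      apply ContinuousOn.add
      · exact (continuousOn_id.add hc1').pow n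
      · exact hc2'
      · exact continuousOn_const.mul hdiv1
      · exact (continuousOn_const.mul hdiv2).mul hc4'
      · exact continuousOn_const
      · exact continuousOn_const
    exact hF.congr fun x hx => hψ x (lt_of_le_of_lt hx.2 hr₀1)
  have h0mem : (0:ℝ) ∈ Ioo (ψ 0) (ψ r₀) := ⟨hψ0, hψr₀⟩
  obtain ⟨x, hx, hx0⟩ := intermediate_value_Ioo hr₀0 hcont h0mem
  have hx01 : x ∈ Ioo (0:ℝ) 1 := ⟨hx.1, lt_trans hx.2 hr₀1⟩
  refine ⟨x, ⟨hx01, hx0⟩, ?_⟩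
  rintro y ⟨hy, hy0⟩
  exact hmono.injOn hy hx01 (by rw [hy0, hx0])
end
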